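/- arXiv:2405.11634 — 9 statements merged into one kernel-verified Lean document; each statement's English description precedes it below -/
import Mathlib

section
/- Suppose the set of regular points of the operator pencil P(λ) = λE − A is nonempty. Then every point of the topological boundary (in ℂ) of the set s(P) of singular points of P is an approximate singularity of P, i.e., for every boundary point λ0 of s(P) there exist unit vectors x_n ∈ D(A) with (λ0E − A)x_n → 0. -/
open Filter Topology

noncomputable section

variable {X Y : Type*}
  [NormedAddCommGroup X] [InnerProductSpace ℂ X] [CompleteSpace X]
  [NormedAddCommGroup Y] [InnerProductSpace ℂ Y] [CompleteSpace Y]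

/-- `lam` is a regular point of the operator pencil `P(λ) = λE - A`:
the operator `λE - A : D(A) → Y` is bijective with bounded inverse. -/
def IsRegularPoint (E : X →L[ℂ] Y) (A : X →ₗ.[ℂ] Y) (lam : ℂ) : Prop :=
  ∃ T : Y →L[ℂ] X,
    (∀ x : A.domain, T (lam • E (x : X) - A x) = (x : X)) ∧
    (∀ y : Y, ∃ x : A.domain, (x : X) = T y ∧ lam • E (x : X) - A x = y)

/-- `lam` is an approximate singularity of the pencil `P(λ) = λE - A`:
there are unit vectors `xₙ ∈ D(A)` with `(λE - A)xₙ → 0`. -/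
def IsApproxSingularity (E : X →L[ℂ] Y) (A : X →ₗ.[ℂ] Y) (lam : ℂ) : Prop :=
  ∃ x : ℕ → A.domain, (∀ n, ‖(x n : X)‖ = 1) ∧
    Tendsto (fun n => lam • E ((x n : X)) - A (x n)) atTop (𝓝 (0 : Y))

set_option linter.unusedSectionVars false

lemma key_neumann (E : X →L[ℂ] Y) (A : X →ₗ.[ℂ] Y) {lam μ : ℂ} {T : Y →L[ℂ] X}
    (h1 : ∀ x : A.domain, T (lam • E (x : X) - A x) = (x : X))
    (h2 : ∀ y : Y, ∃ x : A.domain, (x : X) = T y ∧ lam • E (x : X) - A x = y)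
    (hμ : ‖μ - lam‖ * ‖E.comp T‖ < 1) : IsRegularPoint E A μ := by
  set t : Y →L[ℂ] Y := (μ - lam) • (E.comp T) with ht
  have hts : ‖-t‖ < 1 := by
    rw [norm_neg, ht, norm_smul]; exact hμ
  set u : (Y →L[ℂ] Y)ˣ := Units.oneSub (-t) hts with hu
  have huval : (u : Y →L[ℂ] Y) = 1 + t := by
    rw [hu, Units.val_oneSub, sub_neg_eq_add]
  have hinvu : ∀ z : Y, (↑u⁻¹ : Y →L[ℂ] Y) ((u : Y →L[ℂ] Y) z) = z := by
    intro z
    calc (↑u⁻¹ : Y →L[ℂ] Y) ((u : Y →L[ℂ] Y) z) = ((↑u⁻¹ * ↑u : Y →L[ℂ] Y)) z := rfl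
      _ = z := by rw [u.inv_mul]; rfl
  have huinv : ∀ z : Y, (u : Y →L[ℂ] Y) ((↑u⁻¹ : Y →L[ℂ] Y) z) = z := by
    intro z
    calc (u : Y →L[ℂ] Y) ((↑u⁻¹ : Y →L[ℂ] Y) z) = ((↑u * ↑u⁻¹ : Y →L[ℂ] Y)) z := rfl
      _ = z := by rw [u.mul_inv]; rfl
  have key : ∀ x : A.domain, (u : Y →L[ℂ] Y) (lam • E (x : X) - A x) = μ • E (x : X) - A x := by
    intro x
    rw [huval]
    have h1x := h1 x
    have : t (lam • E (x : X) - A x) = (μ - lam) • E (x : X) := by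
      rw [ht]; simp only [ContinuousLinearMap.smul_apply, ContinuousLinearMap.comp_apply, h1x]
    simp only [ContinuousLinearMap.add_apply, ContinuousLinearMap.one_apply, this]
    module
  refine ⟨T.comp (↑u⁻¹ : Y →L[ℂ] Y), ?_, ?_⟩
  · intro x
    rw [ContinuousLinearMap.comp_apply, ← key x, hinvu, h1 x]
  · intro y
    obtain ⟨x, hx1, hx2⟩ := h2 ((↑u⁻¹ : Y →L[ℂ] Y) y)
    refine ⟨x, by rw [ContinuousLinearMap.comp_apply, hx1], ?_⟩
    have := key x
    rw [hx2] at this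
    rw [← key x, hx2, huinv]

lemma regular_open (E : X →L[ℂ] Y) (A : X →ₗ.[ℂ] Y) :
    IsOpen {lam : ℂ | IsRegularPoint E A lam} := by
  rw [Metric.isOpen_iff]
  rintro lam ⟨T, h1, h2⟩
  refine ⟨(‖E.comp T‖ + 1)⁻¹, by positivity, fun μ hμ => ?_⟩
  rw [Metric.mem_ball, dist_eq_norm] at hμ
  refine key_neumann E A h1 h2 ?_
  have h0 : (0:ℝ) ≤ ‖E.comp T‖ := norm_nonneg _
  have h0' : (0:ℝ) ≤ ‖μ - lam‖ := norm_nonneg _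
  have hpos : (0:ℝ) < ‖E.comp T‖ + 1 := by positivity
  have hlt : ‖μ - lam‖ * (‖E.comp T‖ + 1) < 1 := by
    have h := mul_lt_mul_of_pos_right hμ hpos
    rwa [inv_mul_cancel₀ hpos.ne'] at h
  nlinarith

/-- If the set of regular points of the pencil `λE - A` is nonempty, then every point
of the topological boundary of the set of singular points is an approximate
singularity. -/
theorem stmt_1 (E : X →L[ℂ] Y) (A : X →ₗ.[ℂ] Y)
    (hdense : Dense (A.domain : Set X)) (hclosed : IsClosed (A.graph : Set (X × Y)))
    (hρ : ∃ lam : ℂ, IsRegularPoint E A lam) :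
    ∀ lam0 ∈ frontier {lam : ℂ | ¬ IsRegularPoint E A lam},
      IsApproxSingularity E A lam0 := by
  intro lam0 hfr
  have hSc : {lam : ℂ | ¬ IsRegularPoint E A lam} = {lam : ℂ | IsRegularPoint E A lam}ᶜ := rfl
  rw [frontier_eq_closure_inter_closure] at hfr
  obtain ⟨hc1, hc2⟩ := hfr
  rw [hSc, compl_compl] at hc2
  -- lam0 is singular
  have hsing : ¬ IsRegularPoint E A lam0 := by
    have hcl : IsClosed {lam : ℂ | ¬ IsRegularPoint E A lam} := by
      rw [hSc]; exact (regular_open E A).isClosed_compl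
    exact hcl.closure_subset hc1
  -- choose regular points converging to lam0
  have hseq : ∀ n : ℕ, ∃ lam : ℂ, IsRegularPoint E A lam ∧ dist lam0 lam < ((n:ℝ)+1)⁻¹ := by
    intro n
    rw [Metric.mem_closure_iff] at hc2
    obtain ⟨b, hb, hbd⟩ := hc2 ((n:ℝ)+1)⁻¹ (by positivity)
    exact ⟨b, hb, hbd⟩
  choose lam hreg hdist using hseq
  choose T h1 h2 using hreg
  -- resolvent norms blow up
  have hbig : ∀ n : ℕ, (n:ℝ) < ‖E.comp (T n)‖ := by
    intro n
    by_contra hle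
    push_neg at hle
    apply hsing
    refine key_neumann E A (h1 n) (h2 n) ?_
    have hd : ‖lam0 - lam n‖ < ((n:ℝ)+1)⁻¹ := by have := hdist n; rwa [dist_eq_norm] at this
    have h0 : (0:ℝ) ≤ ‖E.comp (T n)‖ := norm_nonneg _
    have hn1 : (0:ℝ) < (n:ℝ)+1 := by positivity
    have : ‖lam0 - lam n‖ * ‖E.comp (T n)‖ < ((n:ℝ)+1)⁻¹ * ((n:ℝ)+1) := by
      have h1' : ‖lam0 - lam n‖ * ‖E.comp (T n)‖ ≤ ‖lam0 - lam n‖ * ((n:ℝ)+1) := by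
        apply mul_le_mul_of_nonneg_left _ (norm_nonneg _)
        linarith
      have h2' : ‖lam0 - lam n‖ * ((n:ℝ)+1) < ((n:ℝ)+1)⁻¹ * ((n:ℝ)+1) :=
        mul_lt_mul_of_pos_right hd hn1
      linarith
    rwa [inv_mul_cancel₀ hn1.ne'] at this
  -- choose witnessing vectors
  have hy : ∀ n : ℕ, ∃ y : Y, (n:ℝ) * ‖y‖ < ‖E (T n y)‖ := by
    intro n
    by_contra h
    push_neg at h
    have : ‖E.comp (T n)‖ ≤ (n:ℝ) :=
      ContinuousLinearMap.opNorm_le_bound _ (Nat.cast_nonneg n) (fun y => by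
        simpa [ContinuousLinearMap.comp_apply] using h y)
    exact absurd this (not_le.mpr (hbig n))
  choose y hy using hy
  have hx' : ∀ n : ℕ, ∃ x : A.domain, (x:X) = T n (y n) ∧ lam n • E (x:X) - A x = y n :=
    fun n => h2 n (y n)
  choose x' hx'1 hx'2 using hx'
  have hEx : ∀ n, 0 < ‖E ((x' n : X))‖ := fun n => by
    rw [hx'1 n]
    exact lt_of_le_of_lt (by positivity) (hy n)
  have hr : ∀ n, 0 < ‖(x' n : X)‖ := by
    intro n
    rw [norm_pos_iff]
    intro h0
    have := hEx n
    rw [h0] at this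
    simp at this
  have hE : 0 < ‖E‖ := by
    have h := hEx 0
    have h2 := E.le_opNorm (x' 0 : X)
    nlinarith [hr 0]
  set c : ℕ → ℂ := fun n => ((‖(x' n : X)‖ : ℝ) : ℂ)⁻¹ with hc
  have hcn : ∀ n, ‖c n‖ = ‖(x' n : X)‖⁻¹ := by
    intro n
    rw [hc]
    simp only [norm_inv, Complex.norm_real, Real.norm_eq_abs, abs_of_pos (hr n)]
  refine ⟨fun n => c n • x' n, ?_, ?_⟩
  · intro n
    have hcoe : ((c n • x' n : A.domain) : X) = c n • (x' n : X) := rfl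
    rw [hcoe, norm_smul, hcn n]
    exact inv_mul_cancel₀ (hr n).ne'
  · have hval : ∀ n, lam0 • E (((c n • x' n : A.domain) : X)) - A (c n • x' n)
        = c n • (y n + (lam0 - lam n) • E ((x' n : X))) := by
      intro n
      have hcoe : ((c n • x' n : A.domain) : X) = c n • (x' n : X) := rfl
      rw [hcoe, A.map_smul, map_smul, ← hx'2 n]
      module
    apply squeeze_zero_norm'
      (a := fun n : ℕ => ‖E‖ * (1/(n:ℝ)) + ‖E‖ * (1/((n:ℝ)+1)))
    · filter_upwards [eventually_ge_atTop 1] with n hn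
      have hn0 : (0:ℝ) < (n:ℝ) := by exact_mod_cast hn
      have hn1 : (0:ℝ) < (n:ℝ) + 1 := by positivity
      have hy' : (n:ℝ) * ‖y n‖ < ‖E ((x' n : X))‖ := by rw [hx'1 n]; exact hy n
      have hle : ‖E ((x' n : X))‖ ≤ ‖E‖ * ‖(x' n : X)‖ := E.le_opNorm _
      have hd : ‖lam0 - lam n‖ < ((n:ℝ)+1)⁻¹ := by
        have := hdist n; rwa [dist_eq_norm] at this
      have hd1 : ‖lam0 - lam n‖ * ((n:ℝ)+1) < 1 := by
        have h := mul_lt_mul_of_pos_right hd hn1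
        rwa [inv_mul_cancel₀ hn1.ne'] at h
      have b1 : ‖y n‖ / ‖(x' n : X)‖ ≤ ‖E‖ / n := by
        rw [div_le_div_iff₀ (hr n) hn0]
        nlinarith
      have b2 : ‖lam0 - lam n‖ * ‖E ((x' n : X))‖ / ‖(x' n : X)‖ ≤ ‖E‖ / ((n:ℝ)+1) := by
        rw [div_le_div_iff₀ (hr n) hn1]
        nlinarith [norm_nonneg (E ((x' n : X))), norm_nonneg (lam0 - lam n)]
      rw [hval n, norm_smul, hcn n]
      have htri : ‖y n + (lam0 - lam n) • E ((x' n : X))‖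
          ≤ ‖y n‖ + ‖lam0 - lam n‖ * ‖E ((x' n : X))‖ := by
        refine (norm_add_le _ _).trans ?_
        rw [norm_smul]
      have hfin : ‖(x' n : X)‖⁻¹ * ‖y n + (lam0 - lam n) • E ((x' n : X))‖
          ≤ ‖y n‖ / ‖(x' n : X)‖ + ‖lam0 - lam n‖ * ‖E ((x' n : X))‖ / ‖(x' n : X)‖ := by
        rw [← add_div, div_eq_inv_mul]
        exact mul_le_mul_of_nonneg_left htri (by positivity)
      calc ‖(x' n : X)‖⁻¹ * ‖y n + (lam0 - lam n) • E ((x' n : X))‖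
          ≤ ‖y n‖ / ‖(x' n : X)‖ + ‖lam0 - lam n‖ * ‖E ((x' n : X))‖ / ‖(x' n : X)‖ := hfin
        _ ≤ ‖E‖ / n + ‖E‖ / ((n:ℝ)+1) := add_le_add b1 b2
        _ = ‖E‖ * (1/(n:ℝ)) + ‖E‖ * (1/((n:ℝ)+1)) := by ring
    · have : Tendsto (fun n : ℕ => ‖E‖ * (1/(n:ℝ)) + ‖E‖ * (1/((n:ℝ)+1))) atTop
          (𝓝 (‖E‖ * 0 + ‖E‖ * 0)) :=
        (tendsto_const_nhds.mul tendsto_one_div_atTop_nhds_zero_nat).add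
          (tendsto_const_nhds.mul tendsto_one_div_add_atTop_nhds_zero_nat)
      simpa using this
end
end

section
/- If the operator pencil λE − A has a right singular polynomial, then it has a right singular polynomial p0 such that both p0 and its reversal rev p0 have no roots in ℂ (i.e., p0(λ0) ≠ 0 and rev p0(λ0) ≠ 0 for every λ0 ∈ ℂ); moreover, rev p0 is a right singular polynomial for the reversal pencil λA − E, i.e., rev p0(λ0) ∈ D(E) ∩ D(A) and (λ0 A − E) rev p0(λ0) = 0 for every λ0 ∈ ℂ. -/
open Filter Topology

noncomputable section

variable {X Y : Type*}
  [NormedAddCommGroup X] [InnerProductSpace ℂ X] [CompleteSpace X]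
  [NormedAddCommGroup Y] [InnerProductSpace ℂ Y] [CompleteSpace Y]

/-- Evaluation of the `X`-valued polynomial `p(λ) = ∑_{j=0}^k λ^j a_j` at `lam`. -/
def polyEval {Z : Type*} [AddCommGroup Z] [Module ℂ Z] (a : ℕ → Z) (k : ℕ) (lam : ℂ) : Z :=
  ∑ j ∈ Finset.range (k + 1), lam ^ j • a j

/-- Evaluation of the reversal `rev p(λ) = ∑_{j=0}^k λ^j a_{k-j}` at `lam`. -/
def revEval {Z : Type*} [AddCommGroup Z] [Module ℂ Z] (a : ℕ → Z) (k : ℕ) (lam : ℂ) : Z :=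
  ∑ j ∈ Finset.range (k + 1), lam ^ j • a (k - j)

/-- Application of a partially defined operator, extended by `0` outside its domain. -/
noncomputable def pap {W Z : Type*} [NormedAddCommGroup W] [InnerProductSpace ℂ W]
    [NormedAddCommGroup Z] [InnerProductSpace ℂ Z] (A : W →ₗ.[ℂ] Z) (v : W) : Z :=
  haveI := Classical.dec (v ∈ A.domain)
  if h : v ∈ A.domain then A ⟨v, h⟩ else 0

/-- `p(λ) = ∑_{j=0}^k λ^j a_j` is a right singular polynomial for the pencil `λE - A`:
it is a nonzero polynomial, `p(λ0) ∈ D(E) ∩ D(A)` and `(λ0 E - A) p(λ0) = 0` for all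
`λ0 ∈ ℂ`. -/
def IsRightSingularPoly (E A : X →ₗ.[ℂ] Y) (k : ℕ) (a : ℕ → X) : Prop :=
  (∃ j ≤ k, a j ≠ 0) ∧
  ∀ lam : ℂ, polyEval a k lam ∈ E.domain ∧ polyEval a k lam ∈ A.domain ∧
    lam • pap E (polyEval a k lam) - pap A (polyEval a k lam) = 0

/-! ### Auxiliary lemmas -/

section Aux

lemma polyEval_map {Z W : Type*} [AddCommGroup Z] [Module ℂ Z] [AddCommGroup W] [Module ℂ W]
    (f : Z →ₗ[ℂ] W) (a : ℕ → Z) (k : ℕ) (lam : ℂ) :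
    f (polyEval a k lam) = polyEval (fun j => f (a j)) k lam := by
  simp [polyEval, map_sum, map_smul]

lemma coeff_eq_zero {Z : Type*} [AddCommGroup Z] [Module ℂ Z] (c : ℕ → Z) (k : ℕ)
    (S : Set ℂ) (hS : S.Infinite) (h : ∀ lam ∈ S, polyEval c k lam = 0) :
    ∀ j ≤ k, c j = 0 := by
  intro j hj
  rw [← Module.forall_dual_apply_eq_zero_iff ℂ (c j)]
  intro f
  set P : Polynomial ℂ := ∑ i ∈ Finset.range (k + 1), Polynomial.monomial i (f (c i)) with hP
  have hev : ∀ lam ∈ S, P.eval lam = 0 := by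
    intro lam hl
    have := congrArg f (h lam hl)
    rw [polyEval_map] at this
    simpa [hP, Polynomial.eval_finset_sum, polyEval, mul_comm] using this
  have hP0 : P = 0 := by
    apply Polynomial.eq_zero_of_infinite_isRoot
    exact hS.mono (fun x hx => hev x hx)
  have := congrArg (fun Q => Polynomial.coeff Q j) hP0
  simpa [hP, Polynomial.coeff_monomial, Finset.sum_ite_eq', Nat.lt_succ_iff, hj] using this

lemma polyEval_eq_zero_of_coeff {Z : Type*} [AddCommGroup Z] [Module ℂ Z] {c : ℕ → Z} {k : ℕ}
    (h : ∀ j ≤ k, c j = 0) (lam : ℂ) : polyEval c k lam = 0 := by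
  apply Finset.sum_eq_zero
  intro j hj
  rw [h j (Nat.lt_succ_iff.mp (Finset.mem_range.mp hj)), smul_zero]

lemma coeff_mem {Z : Type*} [AddCommGroup Z] [Module ℂ Z] (D : Submodule ℂ Z) (a : ℕ → Z)
    (k : ℕ) (h : ∀ lam : ℂ, polyEval a k lam ∈ D) : ∀ j ≤ k, a j ∈ D := by
  intro j hj
  rw [← Submodule.Quotient.mk_eq_zero D]
  have : ∀ lam : ℂ, polyEval (fun i => D.mkQ (a i)) k lam = 0 := by
    intro lam
    rw [← polyEval_map D.mkQ]
    simpa [Submodule.Quotient.mk_eq_zero] using h lam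
  exact coeff_eq_zero _ k Set.univ Set.infinite_univ (fun lam _ => this lam) j hj

lemma polyEval_mem {Z : Type*} [AddCommGroup Z] [Module ℂ Z] (D : Submodule ℂ Z) {c : ℕ → Z}
    {k : ℕ} (h : ∀ j ≤ k, c j ∈ D) (lam : ℂ) : polyEval c k lam ∈ D := by
  apply Submodule.sum_mem
  intro j hj
  exact D.smul_mem _ (h j (Nat.lt_succ_iff.mp (Finset.mem_range.mp hj)))

lemma polyEval_sub {Z : Type*} [AddCommGroup Z] [Module ℂ Z] (u v : ℕ → Z) (k : ℕ) (lam : ℂ) :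
    polyEval (fun j => u j - v j) k lam = polyEval u k lam - polyEval v k lam := by
  simp [polyEval, Finset.sum_sub_distrib, smul_sub]

lemma polyEval_shift {Z : Type*} [AddCommGroup Z] [Module ℂ Z] (u : ℕ → Z) (k : ℕ) (lam : ℂ) :
    lam • polyEval u k lam
      = polyEval (fun j => if j = 0 then 0 else u (j - 1)) (k + 1) lam := by
  simp only [polyEval]
  rw [Finset.sum_range_succ' (fun j => lam ^ j • (if j = 0 then (0:Z) else u (j-1)))]
  simp only [Nat.succ_ne_zero, if_false, Nat.add_sub_cancel, if_true, reduceIte, smul_zero,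
    add_zero, Finset.smul_sum]
  apply Finset.sum_congr rfl
  intro j hj
  rw [smul_smul, pow_succ, mul_comm]

lemma polyEval_extend {Z : Type*} [AddCommGroup Z] [Module ℂ Z] (u : ℕ → Z) (k : ℕ) (lam : ℂ) :
    polyEval u k lam = polyEval (fun j => if j = k + 1 then 0 else u j) (k + 1) lam := by
  simp only [polyEval]
  rw [Finset.sum_range_succ _ (k + 1)]
  rw [if_pos rfl, smul_zero, add_zero]
  apply Finset.sum_congr rfl
  intro j hj
  have hj' : j ≤ k := Nat.lt_succ_iff.mp (Finset.mem_range.mp hj)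
  rw [if_neg (by omega : j ≠ k + 1)]

lemma polyEval_succ {Z : Type*} [AddCommGroup Z] [Module ℂ Z] (u : ℕ → Z) (k : ℕ) (lam : ℂ) :
    polyEval u (k + 1) lam = polyEval u k lam + lam ^ (k + 1) • u (k + 1) :=
  Finset.sum_range_succ _ _

lemma polyEval_at_zero {Z : Type*} [AddCommGroup Z] [Module ℂ Z] (u : ℕ → Z) (k : ℕ) :
    polyEval u k 0 = u 0 := by
  rw [polyEval, Finset.sum_eq_single 0]
  · simp
  · intro j hj hj0
    rw [zero_pow hj0, zero_smul]
  · simp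

lemma revEval_eq {Z : Type*} [AddCommGroup Z] [Module ℂ Z] (a : ℕ → Z) (k : ℕ) {lam : ℂ}
    (hlam : lam ≠ 0) : revEval a k lam = lam ^ k • polyEval a k lam⁻¹ := by
  have h1 : revEval a k lam = ∑ j ∈ Finset.range (k + 1), lam ^ (k - j) • a j := by
    rw [revEval, ← Finset.sum_range_reflect (fun j => lam ^ (k - j) • a j) (k + 1)]
    apply Finset.sum_congr rfl
    intro j hj
    have hj' : j ≤ k := Nat.lt_succ_iff.mp (Finset.mem_range.mp hj)
    congr 2
    omega
  rw [h1, polyEval, Finset.smul_sum]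
  apply Finset.sum_congr rfl
  intro j hj
  have hj' : j ≤ k := Nat.lt_succ_iff.mp (Finset.mem_range.mp hj)
  rw [smul_smul]
  congr 1
  rw [inv_pow, ← pow_sub₀ lam hlam hj']

lemma divided_diff {Z : Type*} [AddCommGroup Z] [Module ℂ Z] (a : ℕ → Z) (m : ℕ) (μ lam : ℂ) :
    polyEval a (m + 1) lam - polyEval a (m + 1) μ
      = (lam - μ) • polyEval
          (fun j => ∑ i ∈ Finset.range (m + 1 - j), μ ^ i • a (j + 1 + i)) m lam := by
  rw [polyEval, polyEval, ← Finset.sum_sub_distrib]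
  have h1 : ∀ j, lam ^ j • a j - μ ^ j • a j = (lam ^ j - μ ^ j) • a j := by
    intro j; rw [sub_smul]
  simp only [h1]
  have h2 : ∀ j, lam ^ j - μ ^ j
      = (∑ t ∈ Finset.range j, lam ^ t * μ ^ (j - 1 - t)) * (lam - μ) :=
    fun j => (geom_sum₂_mul lam μ j).symm
  simp only [h2]
  have h3 : ∀ j, ((∑ t ∈ Finset.range j, lam ^ t * μ ^ (j - 1 - t)) * (lam - μ)) • a j
      = (lam - μ) • ∑ t ∈ Finset.range j, (lam ^ t * μ ^ (j - 1 - t)) • a j := by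
    intro j
    rw [mul_comm, mul_smul, Finset.sum_smul]
  simp only [h3]
  rw [← Finset.smul_sum]
  congr 1
  have swap := Finset.sum_Ico_Ico_comm' 0 (m + 2)
      (fun t i => (lam ^ t * μ ^ (i - 1 - t)) • a i)
  simp only [← Finset.range_eq_Ico] at swap
  rw [← swap, polyEval, Finset.sum_range_succ (n := m + 1)]
  have hlast : ∑ i ∈ Finset.Ico (m + 1 + 1) (m + 2),
      (lam ^ (m+1) * μ ^ (i - 1 - (m+1))) • a i = 0 := by
    simp
  rw [hlast, add_zero]
  apply Finset.sum_congr rfl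
  intro t ht
  have ht' : t ≤ m := Nat.lt_succ_iff.mp (Finset.mem_range.mp ht)
  rw [Finset.sum_Ico_eq_sum_range]
  have hn : m + 2 - (t + 1) = m + 1 - t := by omega
  rw [hn, Finset.smul_sum]
  apply Finset.sum_congr rfl
  intro i hi
  show (lam ^ t * μ ^ (t + 1 + i - 1 - t)) • a (t + 1 + i) = lam ^ t • μ ^ i • a (t + 1 + i)
  have he : t + 1 + i - 1 - t = i := by omega
  rw [he, smul_smul]

end Aux

section PapAux

variable {X' Y' : Type*}
  [NormedAddCommGroup X'] [InnerProductSpace ℂ X']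
  [NormedAddCommGroup Y'] [InnerProductSpace ℂ Y']

lemma pap_eq (T : X' →ₗ.[ℂ] Y') {x : X'} (h : x ∈ T.domain) : pap T x = T ⟨x, h⟩ := by
  unfold pap
  rw [dif_pos h]

lemma pap_smul (T : X' →ₗ.[ℂ] Y') {x : X'} (hx : x ∈ T.domain) (c : ℂ) :
    pap T (c • x) = c • pap T x := by
  rw [pap_eq T (T.domain.smul_mem c hx), pap_eq T hx]
  have : (⟨c • x, T.domain.smul_mem c hx⟩ : T.domain) = c • (⟨x, hx⟩ : T.domain) := rfl
  rw [this, T.map_smul]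

lemma pap_polyEval (T : X' →ₗ.[ℂ] Y') (c : ℕ → X') (k : ℕ)
    (h : ∀ j ≤ k, c j ∈ T.domain) (lam : ℂ) :
    pap T (polyEval c k lam) = polyEval (fun j => pap T (c j)) k lam := by
  set c' : ℕ → T.domain := fun j => if h' : j ≤ k then ⟨c j, h j h'⟩ else 0 with hc'
  have hmem := polyEval_mem T.domain h lam
  rw [pap_eq T hmem]
  have key : (⟨polyEval c k lam, hmem⟩ : T.domain)
      = ∑ j ∈ Finset.range (k + 1), lam ^ j • c' j := by
    apply Subtype.ext
    push_cast [polyEval]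
    apply Finset.sum_congr rfl
    intro j hj
    rw [hc']
    simp [dif_pos (Nat.lt_succ_iff.mp (Finset.mem_range.mp hj))]
  rw [key, ← T.toFun_eq_coe, map_sum]
  apply Finset.sum_congr rfl
  intro j hj
  have hj' : j ≤ k := Nat.lt_succ_iff.mp (Finset.mem_range.mp hj)
  rw [map_smul, T.toFun_eq_coe]
  show lam ^ j • T (c' j) = lam ^ j • pap T (c j)
  rw [pap_eq T (h j hj')]
  congr 1
  rw [hc']
  simp [dif_pos hj']

lemma pencil_everywhere (T S : X' →ₗ.[ℂ] Y') (c : ℕ → X') (k : ℕ)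
    (hT : ∀ j ≤ k, c j ∈ T.domain) (hS : ∀ j ≤ k, c j ∈ S.domain)
    (Sset : Set ℂ) (hinf : Sset.Infinite)
    (h : ∀ lam ∈ Sset, lam • pap T (polyEval c k lam) - pap S (polyEval c k lam) = 0) :
    ∀ lam : ℂ, lam • pap T (polyEval c k lam) - pap S (polyEval c k lam) = 0 := by
  have key : ∀ lam : ℂ, lam • pap T (polyEval c k lam) - pap S (polyEval c k lam)
      = polyEval (fun j => (if j = 0 then 0 else pap T (c (j - 1)))
            - (if j = k + 1 then 0 else pap S (c j))) (k + 1) lam := by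
    intro lam
    rw [pap_polyEval T c k hT lam, pap_polyEval S c k hS lam, polyEval_shift,
      polyEval_extend (fun j => pap S (c j)) k lam, ← polyEval_sub]
  have hz := coeff_eq_zero _ (k + 1) Sset hinf
    (fun lam hl => by rw [← key lam]; exact h lam hl)
  intro lam
  rw [key lam]
  exact polyEval_eq_zero_of_coeff hz lam

end PapAux

/-- If the pencil `λE - A` has a right singular polynomial, then it has one, `p₀`, such
that both `p₀` and its reversal have no roots in `ℂ`, and moreover the reversal of `p₀`
is a right singular polynomial for the reversal pencil `λA - E`. -/
theorem stmt_3 (E A : X →ₗ.[ℂ] Y)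
    (h : ∃ (k : ℕ) (a : ℕ → X), IsRightSingularPoly E A k a) :
    ∃ (k : ℕ) (a : ℕ → X),
      IsRightSingularPoly E A k a ∧
      (∀ lam : ℂ, polyEval a k lam ≠ 0) ∧
      (∀ lam : ℂ, revEval a k lam ≠ 0) ∧
      (∀ lam : ℂ, revEval a k lam ∈ E.domain ∧ revEval a k lam ∈ A.domain ∧
        lam • pap A (revEval a k lam) - pap E (revEval a k lam) = 0) := by
  obtain ⟨k, a, ha⟩ := h
  induction k using Nat.strong_induction_on generalizing a with
  | _ k IH =>
  obtain ⟨hnz, hsing⟩ := ha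
  have hEdom : ∀ j ≤ k, a j ∈ E.domain := coeff_mem E.domain a k (fun lam => (hsing lam).1)
  have hAdom : ∀ j ≤ k, a j ∈ A.domain := coeff_mem A.domain a k (fun lam => (hsing lam).2.1)
  by_cases htriv : ∃ m : ℕ, k = m + 1 ∧ a k = 0
  · -- trailing coefficient vanishes: shrink the degree
    obtain ⟨m, rfl, h0⟩ := htriv
    refine IH m (Nat.lt_succ_self m) a ⟨?_, ?_⟩
    · obtain ⟨j, hj, hja⟩ := hnz
      refine ⟨j, ?_, hja⟩
      rcases Nat.lt_succ_iff_lt_or_eq.mp (Nat.lt_succ_of_le hj) with h' | h'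
      · omega
      · exfalso; exact hja (h' ▸ h0)
    · intro lam
      have heq : polyEval a m lam = polyEval a (m + 1) lam := by
        rw [polyEval_succ, h0, smul_zero, add_zero]
      rw [heq]
      exact hsing lam
  · by_cases hroot : ∃ μ : ℂ, polyEval a k μ = 0
    · -- there is a root: divide it out and shrink the degree
      obtain ⟨μ, hμ⟩ := hroot
      rcases k with _ | m
      · obtain ⟨j, hj, hja⟩ := hnz
        obtain rfl := Nat.le_zero.mp hj
        exact absurd (by simpa [polyEval] using hμ) hja
      · set b : ℕ → X := fun j => ∑ i ∈ Finset.range (m + 1 - j), μ ^ i • a (j + 1 + i) with hb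
        have hfac : ∀ lam : ℂ, polyEval a (m + 1) lam = (lam - μ) • polyEval b m lam := by
          intro lam
          have hdd := divided_diff a m μ lam
          rw [hμ, sub_zero] at hdd
          exact hdd
        have hbE : ∀ j ≤ m, b j ∈ E.domain := by
          intro j hj
          apply Submodule.sum_mem
          intro i hi
          exact E.domain.smul_mem _
            (hEdom _ (by rw [Finset.mem_range] at hi; omega))
        have hbA : ∀ j ≤ m, b j ∈ A.domain := by
          intro j hj
          apply Submodule.sum_mem
          intro i hi
          exact A.domain.smul_mem _
            (hAdom _ (by rw [Finset.mem_range] at hi; omega))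
        have hbnz : ∃ j ≤ m, b j ≠ 0 := by
          by_contra hb0
          push_neg at hb0
          have hall : ∀ lam : ℂ, polyEval a (m + 1) lam = 0 := by
            intro lam
            rw [hfac lam, polyEval_eq_zero_of_coeff hb0, smul_zero]
          obtain ⟨j, hj, hja⟩ := hnz
          exact hja (coeff_eq_zero a (m + 1) Set.univ Set.infinite_univ
            (fun lam _ => hall lam) j hj)
        have hSinf : ({μ}ᶜ : Set ℂ).Infinite := (Set.finite_singleton μ).infinite_compl
        have hp0 : ∀ lam ∈ ({μ}ᶜ : Set ℂ),
            lam • pap E (polyEval b m lam) - pap A (polyEval b m lam) = 0 := by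
          intro lam hlam
          have hne : lam - μ ≠ 0 := sub_ne_zero.mpr (Set.mem_compl_singleton_iff.mp hlam)
          have hq : polyEval b m lam = (lam - μ)⁻¹ • polyEval a (m + 1) lam := by
            rw [hfac lam, smul_smul, inv_mul_cancel₀ hne, one_smul]
          obtain ⟨hEm, hAm, hz⟩ := hsing lam
          rw [hq, pap_smul E hEm, pap_smul A hAm, smul_comm lam, ← smul_sub, hz, smul_zero]
        have hpencil := pencil_everywhere E A b m hbE hbA _ hSinf hp0
        exact IH m (Nat.lt_succ_self m) b
          ⟨hbnz, fun lam => ⟨polyEval_mem _ hbE lam, polyEval_mem _ hbA lam, hpencil lam⟩⟩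
    · -- no roots: this polynomial works
      push_neg at hroot
      have hak : a k ≠ 0 := by
        rcases k with _ | m
        · obtain ⟨j, hj, hja⟩ := hnz
          obtain rfl := Nat.le_zero.mp hj
          exact hja
        · intro h0
          exact htriv ⟨m, rfl, h0⟩
      have hrevc : ∀ lam : ℂ, revEval a k lam = polyEval (fun j => a (k - j)) k lam :=
        fun lam => rfl
      have hcE : ∀ j ≤ k, a (k - j) ∈ E.domain := fun j _ => hEdom _ (Nat.sub_le k j)
      have hcA : ∀ j ≤ k, a (k - j) ∈ A.domain := fun j _ => hAdom _ (Nat.sub_le k j)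
      have hS0 : ({0}ᶜ : Set ℂ).Infinite := (Set.finite_singleton 0).infinite_compl
      have hp0 : ∀ lam ∈ ({0}ᶜ : Set ℂ),
          lam • pap A (polyEval (fun j => a (k - j)) k lam)
            - pap E (polyEval (fun j => a (k - j)) k lam) = 0 := by
        intro lam hlam
        have hl : lam ≠ 0 := Set.mem_compl_singleton_iff.mp hlam
        have hrv : polyEval (fun j => a (k - j)) k lam = lam ^ k • polyEval a k lam⁻¹ := by
          rw [← hrevc, revEval_eq a k hl]
        obtain ⟨hEm, hAm, hz⟩ := hsing lam⁻¹
        have hz' : pap A (polyEval a k lam⁻¹) = lam⁻¹ • pap E (polyEval a k lam⁻¹) := by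
          rw [sub_eq_zero] at hz
          exact hz.symm
        rw [hrv, pap_smul A hAm, pap_smul E hEm, hz', smul_smul, smul_smul]
        have hcoe : lam * lam ^ k * lam⁻¹ = lam ^ k := by
          field_simp
        rw [hcoe, sub_self]
      have hpencil := pencil_everywhere A E (fun j => a (k - j)) k hcA hcE _ hS0 hp0
      refine ⟨k, a, ⟨hnz, hsing⟩, hroot, ?_, ?_⟩
      · intro lam
        by_cases hl : lam = 0
        · subst hl
          rw [hrevc, polyEval_at_zero]
          simpa using hak
        · rw [revEval_eq a k hl]
          exact smul_ne_zero (pow_ne_zero k hl) (hroot _)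
      · intro lam
        refine ⟨?_, ?_, ?_⟩
        · rw [hrevc]; exact polyEval_mem _ hcE lam
        · rw [hrevc]; exact polyEval_mem _ hcA lam
        · rw [hrevc]; exact hpencil lam
end
end

section
/- If the operator pencil P(λ) = λE − A has a left singular polynomial, i.e., the adjoint pencil λE* − A* has a right singular polynomial, then for every λ0 ∈ ℂ the operator λ0E − A : D(A) → Y is not bijective with bounded inverse (so the set of singular points of P is all of ℂ), and additionally the operator E restricted to D(A) is not bijective with bounded inverse from D(A) onto Y (∞ is a singularity). -/
open Filter Topology

noncomputable section

variable {X Y : Type*}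
  [NormedAddCommGroup X] [InnerProductSpace ℂ X] [CompleteSpace X]
  [NormedAddCommGroup Y] [InnerProductSpace ℂ Y] [CompleteSpace Y]

/-- The pencil `λE - A` has a left singular polynomial: a nonzero `Y`-valued polynomial
`q` with `q(λ0) ∈ D(A*)` and `(λ0 E* - A*) q(λ0) = 0` for all `λ0 ∈ ℂ`. -/
def HasLeftSingularPoly (E : X →L[ℂ] Y) (A : X →ₗ.[ℂ] Y) : Prop :=
  ∃ (k : ℕ) (q : ℕ → Y), (∃ j ≤ k, q j ≠ 0) ∧
    ∀ lam : ℂ, polyEval q k lam ∈ A.adjoint.domain ∧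
      lam • (ContinuousLinearMap.adjoint E) (polyEval q k lam) -
        pap A.adjoint (polyEval q k lam) = 0


lemma auxPolyCoeffZero {Z : Type*} [AddCommGroup Z] [Module ℂ Z]
    (a : ℕ → Z) (k : ℕ) {s : Set ℂ} (hs : s.Infinite)
    (h : ∀ μ ∈ s, ∑ j ∈ Finset.range (k + 1), μ ^ j • a j = 0) :
    ∀ j ≤ k, a j = 0 := by
  intro j hj
  rw [← Module.forall_dual_apply_eq_zero_iff ℂ]
  intro φ
  set P : Polynomial ℂ :=
    ∑ i ∈ Finset.range (k + 1), Polynomial.C (φ (a i)) * Polynomial.X ^ i with hPdef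
  have hP : P = 0 := by
    apply Polynomial.eq_zero_of_infinite_isRoot
    apply hs.mono
    intro μ hμ
    have := congrArg φ (h μ hμ)
    simp only [map_sum, map_smul, map_zero, smul_eq_mul] at this
    simp only [Set.mem_setOf_eq, Polynomial.IsRoot, hPdef, Polynomial.eval_finset_sum,
      Polynomial.eval_mul, Polynomial.eval_C, Polynomial.eval_pow, Polynomial.eval_X]
    calc ∑ i ∈ Finset.range (k + 1), φ (a i) * μ ^ i
        = ∑ i ∈ Finset.range (k + 1), μ ^ i * φ (a i) := by
          exact Finset.sum_congr rfl fun i _ => mul_comm _ _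
      _ = 0 := this
  have hc : P.coeff j = φ (a j) := by
    rw [hPdef, Polynomial.finset_sum_coeff]
    rw [Finset.sum_eq_single j]
    · simp
    · intro b _ hb
      simp [Polynomial.coeff_C_mul, Polynomial.coeff_X_pow, Ne.symm hb]
    · intro hnj
      exact absurd (Finset.mem_range.mpr (Nat.lt_succ_of_le hj)) hnj
  rw [hP] at hc
  simpa using hc.symm

lemma auxPolyCoeffMem {Z : Type*} [AddCommGroup Z] [Module ℂ Z] (S : Submodule ℂ Z)
    (a : ℕ → Z) (k : ℕ)
    (h : ∀ μ : ℂ, ∑ j ∈ Finset.range (k + 1), μ ^ j • a j ∈ S) :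
    ∀ j ≤ k, a j ∈ S := by
  intro j hj
  have h0 : ∀ μ ∈ (Set.univ : Set ℂ),
      ∑ i ∈ Finset.range (k + 1), μ ^ i • S.mkQ (a i) = 0 := by
    intro μ _
    have : S.mkQ (∑ i ∈ Finset.range (k + 1), μ ^ i • a i) = 0 :=
      (Submodule.Quotient.mk_eq_zero S).mpr (h μ)
    simpa [map_sum, map_smul] using this
  have := auxPolyCoeffZero (fun i => S.mkQ (a i)) k Set.infinite_univ h0 j hj
  simp only [Submodule.mkQ_apply] at this
  rwa [Submodule.Quotient.mk_eq_zero] at this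

/-- If the pencil `λE - A` has a left singular polynomial, then no `λ0 ∈ ℂ` is a regular
point (the set of singular points is all of `ℂ`), and in addition `E : D(A) → Y` is not
bijective with bounded inverse (`∞` is a singularity). -/
theorem stmt_5 (E : X →L[ℂ] Y) (A : X →ₗ.[ℂ] Y)
    (hdense : Dense (A.domain : Set X)) (hclosed : IsClosed (A.graph : Set (X × Y)))
    (h : HasLeftSingularPoly E A) :
    (∀ lam0 : ℂ, ¬ IsRegularPoint E A lam0) ∧
    ¬ (∃ T : Y →L[ℂ] X,
        (∀ x : A.domain, T (E (x : X)) = (x : X)) ∧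
        (∀ y : Y, ∃ x : A.domain, (x : X) = T y ∧ E (x : X) = y)) := by
  classical
  obtain ⟨k, q, ⟨j0, hj0k, hj0⟩, hq⟩ := h
  set E' := ContinuousLinearMap.adjoint E with hE'
  have hmem : ∀ μ : ℂ, polyEval q k μ ∈ A.adjoint.domain := fun μ => (hq μ).1
  have hrel : ∀ μ : ℂ, A.adjoint ⟨polyEval q k μ, hmem μ⟩ = μ • E' (polyEval q k μ) := by
    intro μ
    have h2 := (hq μ).2
    rw [sub_eq_zero] at h2
    have hpap : pap A.adjoint (polyEval q k μ) = A.adjoint ⟨polyEval q k μ, hmem μ⟩ := by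
      simp only [pap]
      rw [dif_pos (hmem μ)]
    rw [hpap] at h2
    exact h2.symm
  have key : ∀ (μ : ℂ) (x : A.domain),
      (inner ℂ (polyEval q k μ) (A x) : ℂ)
        = (starRingEnd ℂ) μ * inner ℂ (polyEval q k μ) (E (x : X)) := by
    intro μ x
    have hfa := (LinearPMap.adjoint_isFormalAdjoint hdense) ⟨polyEval q k μ, hmem μ⟩ x
    rw [hrel μ, inner_smul_left, ContinuousLinearMap.adjoint_inner_left] at hfa
    exact hfa.symm
  constructor
  · rintro lam0 ⟨T, hT1, hT2⟩
    set c := (starRingEnd ℂ) lam0 with hc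
    set K := ‖E'‖ * ‖T‖ with hKdef
    have hK : 0 ≤ K := mul_nonneg (norm_nonneg _) (norm_nonneg _)
    set r := (K + 1)⁻¹ with hrdef
    have hr : 0 < r := by positivity
    have hz : ∀ μ ∈ Metric.ball c r, polyEval q k μ = 0 := by
      intro μ hμ
      obtain ⟨x, hx1, hx2⟩ := hT2 (polyEval q k μ)
      have h1 : (inner ℂ (polyEval q k μ) (polyEval q k μ) : ℂ)
          = (lam0 - (starRingEnd ℂ) μ) * inner ℂ (polyEval q k μ) (E (x : X)) := by
        calc (inner ℂ (polyEval q k μ) (polyEval q k μ) : ℂ)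
            = inner ℂ (polyEval q k μ) (lam0 • E (x : X) - A x) := by rw [hx2]
          _ = (lam0 - (starRingEnd ℂ) μ) * inner ℂ (polyEval q k μ) (E (x : X)) := by
              rw [inner_sub_right, inner_smul_right, key μ x]; ring
      have h2 : (inner ℂ (polyEval q k μ) (E (x : X)) : ℂ)
          = inner ℂ (E' (polyEval q k μ)) (T (polyEval q k μ)) := by
        rw [← hx1]
        exact (ContinuousLinearMap.adjoint_inner_left E (x : X) (polyEval q k μ)).symm
      set p := polyEval q k μ with hp
      have hd : ‖lam0 - (starRingEnd ℂ) μ‖ = dist μ c := by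
        have hconj : lam0 - (starRingEnd ℂ) μ = (starRingEnd ℂ) (c - μ) := by
          rw [hc, map_sub, Complex.conj_conj]
        rw [hconj, RCLike.norm_conj, dist_eq_norm, norm_sub_rev]
      have hdr : dist μ c < r := Metric.mem_ball.mp hμ
      have e1 : ‖(inner ℂ p p : ℂ)‖ = ‖p‖ ^ 2 := by
        rw [inner_self_eq_norm_sq_to_K, norm_pow]
        simp
      have hbound : ‖p‖ ^ 2 ≤ dist μ c * (K * ‖p‖ ^ 2) := by
        calc ‖p‖ ^ 2 = ‖(inner ℂ p p : ℂ)‖ := e1.symm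
          _ = ‖lam0 - (starRingEnd ℂ) μ‖ * ‖(inner ℂ (E' p) (T p) : ℂ)‖ := by
              rw [h1, h2, norm_mul]
          _ ≤ dist μ c * (‖E' p‖ * ‖T p‖) := by
              rw [hd]
              exact mul_le_mul_of_nonneg_left (norm_inner_le_norm _ _) dist_nonneg
          _ ≤ dist μ c * (K * ‖p‖ ^ 2) := by
              apply mul_le_mul_of_nonneg_left _ dist_nonneg
              have b1 : ‖E' p‖ ≤ ‖E'‖ * ‖p‖ := E'.le_opNorm p
              have b2 : ‖T p‖ ≤ ‖T‖ * ‖p‖ := T.le_opNorm p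
              calc ‖E' p‖ * ‖T p‖ ≤ (‖E'‖ * ‖p‖) * (‖T‖ * ‖p‖) :=
                    mul_le_mul b1 b2 (norm_nonneg _) (by positivity)
                _ = K * ‖p‖ ^ 2 := by rw [hKdef]; ring
      by_contra hp0
      have hpnorm : 0 < ‖p‖ := norm_pos_iff.mpr hp0
      have hrK : dist μ c * K < 1 := by
        have h3 : dist μ c * (K + 1) < 1 := by
          rw [hrdef] at hdr
          calc dist μ c * (K + 1) < (K + 1)⁻¹ * (K + 1) :=
                mul_lt_mul_of_pos_right hdr (by positivity)
            _ = 1 := inv_mul_cancel₀ (by positivity)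
        nlinarith [dist_nonneg (x := μ) (y := c)]
      nlinarith [mul_lt_mul_of_pos_right hrK (pow_pos hpnorm 2)]
    have hinf : (Metric.ball c r).Infinite :=
      infinite_of_mem_nhds c (Metric.ball_mem_nhds c hr)
    exact hj0 (auxPolyCoeffZero q k hinf (fun μ hμ => hz μ hμ) j0 hj0k)
  · rintro ⟨T, hT1, hT2⟩
    set D := (Finset.range (k + 1)).filter (fun j => q j ≠ 0) with hD
    have hDne : D.Nonempty :=
      ⟨j0, Finset.mem_filter.mpr ⟨Finset.mem_range.mpr (Nat.lt_succ_of_le hj0k), hj0⟩⟩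
    set d := D.max' hDne with hd
    have hdD : d ∈ D := D.max'_mem hDne
    have hdk : d ≤ k := Nat.lt_succ_iff.mp (Finset.mem_range.mp (Finset.mem_filter.mp hdD).1)
    have hqd : q d ≠ 0 := (Finset.mem_filter.mp hdD).2
    have hmax : ∀ j, d < j → j ≤ k → q j = 0 := by
      intro j hdj hjk
      by_contra hne
      exact absurd
        (D.le_max' j (Finset.mem_filter.mpr ⟨Finset.mem_range.mpr (Nat.lt_succ_of_le hjk), hne⟩))
        (not_le.mpr hdj)
    set cpair : ℕ → Y × X := fun j =>
      (if j ≤ k then q j else 0, if j = 0 then 0 else E' (q (j - 1))) with hcpair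
    have hsum : ∀ μ : ℂ, ∑ j ∈ Finset.range (k + 1 + 1), μ ^ j • cpair j ∈ A.adjoint.graph := by
      intro μ
      have heq : ∑ j ∈ Finset.range (k + 1 + 1), μ ^ j • cpair j
          = (polyEval q k μ, μ • E' (polyEval q k μ)) := by
        refine Prod.ext_iff.mpr ⟨?_, ?_⟩
        · rw [Prod.fst_sum]
          simp only [Prod.smul_fst, hcpair]
          rw [Finset.sum_range_succ]
          rw [if_neg (by omega : ¬ (k + 1 ≤ k))]
          rw [smul_zero, add_zero]
          refine Finset.sum_congr rfl fun i hi => ?_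
          rw [if_pos (Nat.lt_succ_iff.mp (Finset.mem_range.mp hi))]
        · rw [Prod.snd_sum]
          simp only [Prod.smul_snd, hcpair]
          have hlast : (μ ^ 0 • if (0 : ℕ) = 0 then (0 : X) else E' (q (0 - 1))) = 0 := by
            simp
          rw [Finset.sum_range_succ', hlast, add_zero, polyEval, map_sum, Finset.smul_sum]
          refine Finset.sum_congr rfl fun i hi => ?_
          rw [if_neg (Nat.succ_ne_zero i), Nat.add_sub_cancel, map_smul, smul_smul,
            ← pow_succ']
      rw [heq, ← hrel μ]
      exact A.adjoint.mem_graph ⟨polyEval q k μ, hmem μ⟩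
    have hcoef := auxPolyCoeffMem A.adjoint.graph cpair (k + 1) hsum (d + 1)
      (Nat.succ_le_succ hdk)
    have hfst : (cpair (d + 1)).1 = 0 := by
      simp only [hcpair]
      by_cases hcase : d + 1 ≤ k
      · rw [if_pos hcase]
        exact hmax (d + 1) (Nat.lt_succ_self d) hcase
      · rw [if_neg hcase]
    have hsnd : (cpair (d + 1)).2 = E' (q d) := by
      simp only [hcpair, Nat.add_sub_cancel]
      rw [if_neg (Nat.succ_ne_zero d)]
    have hEd : E' (q d) = 0 := by
      have he : cpair (d + 1) = ((0 : Y), E' (q d)) := by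
        rw [← hfst, ← hsnd]
      have h0 : ((0 : Y), E' (q d)) ∈ A.adjoint.graph := he ▸ hcoef
      exact A.adjoint.graph_fst_eq_zero_snd h0 rfl
    obtain ⟨x, hx1, hx2⟩ := hT2 (q d)
    have hzero : (inner ℂ (q d) (q d) : ℂ) = 0 := by
      calc (inner ℂ (q d) (q d) : ℂ) = inner ℂ (q d) (E (x : X)) := by rw [hx2]
        _ = inner ℂ (E' (q d)) (x : X) :=
            (ContinuousLinearMap.adjoint_inner_left E (x : X) (q d)).symm
        _ = 0 := by rw [hEd, inner_zero_left]
    exact hqd (inner_self_eq_zero.mp hzero)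
end
end

section
/- Suppose the operator pencil P(λ) = λE − A has a right singular function, i.e., there are a closed discrete set D0 ⊆ ℂ, a holomorphic function x : ℂ ∖ D0 → X, and a closed discrete set D1 ⊇ D0 such that for every λ0 ∈ ℂ ∖ D1 one has x(λ0) ∈ D(A), x(λ0) ≠ 0 and (λ0E − A)x(λ0) = 0. Then every λ0 ∈ ℂ ∖ D1 is a point singularity of P, and the set of approximate singularities of P equals all of ℂ. -/
open Filter Topology

noncomputable section

variable {X Y : Type*}
  [NormedAddCommGroup X] [InnerProductSpace ℂ X] [CompleteSpace X]
  [NormedAddCommGroup Y] [InnerProductSpace ℂ Y] [CompleteSpace Y]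

/-- If the pencil `λE - A` has a right singular function `x`, holomorphic off a closed
discrete set `D0` and satisfying `x(λ0) ∈ D(A)`, `x(λ0) ≠ 0`, `(λ0 E - A) x(λ0) = 0`
off a closed discrete set `D1 ⊇ D0`, then every `λ0 ∉ D1` is a point singularity of the
pencil and the set of approximate singularities is all of `ℂ`. -/
theorem stmt_6 (E : X →L[ℂ] Y) (A : X →ₗ.[ℂ] Y)
    (hdense : Dense (A.domain : Set X)) (hclosed : IsClosed (A.graph : Set (X × Y)))
    (D0 D1 : Set ℂ)
    (hD0closed : IsClosed D0) (hD0disc : ∀ z : ℂ, ¬ AccPt z (Filter.principal D0))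
    (hD1closed : IsClosed D1) (hD1disc : ∀ z : ℂ, ¬ AccPt z (Filter.principal D1))
    (hsub : D0 ⊆ D1)
    (x : ℂ → X) (hxhol : DifferentiableOn ℂ x D0ᶜ)
    (hx : ∀ lam ∉ D1, x lam ∈ A.domain ∧ x lam ≠ 0 ∧
      lam • E (x lam) - pap A (x lam) = 0) :
    (∀ lam0 ∉ D1, ∃ v : A.domain, (v : X) ≠ 0 ∧ lam0 • E (v : X) - A v = 0) ∧
    (∀ lam0 : ℂ, IsApproxSingularity E A lam0) := by
  have key : ∀ lam ∉ D1, ∃ v : A.domain, (v : X) ≠ 0 ∧ lam • E (v : X) - A v = 0 := by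
    intro lam h0
    obtain ⟨hmem, hne, heq⟩ := hx lam h0
    refine ⟨⟨x lam, hmem⟩, hne, ?_⟩
    rwa [pap, dif_pos hmem] at heq
  refine ⟨key, ?_⟩
  intro lam0
  -- get a sequence in `D1ᶜ` converging to `lam0`
  have hNe : (𝓝[D1ᶜ] lam0).NeBot := by
    by_cases h : lam0 ∈ D1
    · have hD : D1ᶜ ∈ 𝓝[≠] lam0 := by
        have h1 := hD1disc lam0
        rw [AccPt, not_neBot, inf_principal_eq_bot] at h1
        exact h1
      have hle : 𝓝[≠] lam0 ≤ 𝓝[D1ᶜ] lam0 :=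
        le_inf nhdsWithin_le_nhds (le_principal_iff.mpr hD)
      exact Filter.neBot_of_le hle
    · exact mem_closure_iff_nhdsWithin_neBot.mp (subset_closure h)
  obtain ⟨μ, hμ⟩ := (𝓝[D1ᶜ] lam0).exists_seq_tendsto
  rw [tendsto_nhdsWithin_iff] at hμ
  obtain ⟨hμ1, hμ2⟩ := hμ
  obtain ⟨N, hN⟩ := (eventually_atTop).mp hμ2
  set ν : ℕ → ℂ := fun n => μ (n + N) with hνdef
  have hν : ∀ n, ν n ∉ D1 := fun n => hN (n + N) (Nat.le_add_left N n)
  have hνlim : Tendsto ν atTop (𝓝 lam0) :=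
    hμ1.comp (tendsto_atTop_atTop.mpr fun b => ⟨b, fun a ha => le_trans ha (Nat.le_add_right a N)⟩)
  refine ⟨fun n => ((‖x (ν n)‖⁻¹ : ℝ) : ℂ) • ⟨x (ν n), (hx (ν n) (hν n)).1⟩, ?_, ?_⟩
  · intro n
    have hne := (hx (ν n) (hν n)).2.1
    have : ‖(((‖x (ν n)‖⁻¹ : ℝ) : ℂ) • x (ν n))‖ = ‖x (ν n)‖⁻¹ * ‖x (ν n)‖ := by
      rw [norm_smul, Complex.norm_real, Real.norm_eq_abs,
        abs_of_nonneg (inv_nonneg.mpr (norm_nonneg _))]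
    rw [Submodule.coe_smul]
    rw [this, inv_mul_cancel₀ (norm_ne_zero_iff.mpr hne)]
  · have hform : ∀ n, lam0 • E ((((‖x (ν n)‖⁻¹ : ℝ) : ℂ) • (⟨x (ν n), (hx (ν n) (hν n)).1⟩ : A.domain) : A.domain) : X)
        - A (((‖x (ν n)‖⁻¹ : ℝ) : ℂ) • ⟨x (ν n), (hx (ν n) (hν n)).1⟩)
        = (lam0 - ν n) • (((‖x (ν n)‖⁻¹ : ℝ) : ℂ) • E (x (ν n))) := by
      intro n
      have heq := (hx (ν n) (hν n)).2.2
      rw [pap, dif_pos (hx (ν n) (hν n)).1, sub_eq_zero] at heq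
      rw [A.map_smul, ← heq, Submodule.coe_smul, map_smul]
      module
    rw [tendsto_zero_iff_norm_tendsto_zero]
    apply squeeze_zero (fun n => norm_nonneg _) (g := fun n => ‖lam0 - ν n‖ * ‖E‖)
    · intro n
      rw [hform n, norm_smul]
      gcongr
      calc ‖(((‖x (ν n)‖⁻¹ : ℝ) : ℂ) • E (x (ν n)))‖
          = ‖E ((((‖x (ν n)‖⁻¹ : ℝ) : ℂ) • x (ν n)))‖ := by rw [map_smul]
        _ ≤ ‖E‖ * ‖(((‖x (ν n)‖⁻¹ : ℝ) : ℂ) • x (ν n))‖ := E.le_opNorm _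
        _ = ‖E‖ * 1 := by
            congr 1
            rw [norm_smul, Complex.norm_real, Real.norm_eq_abs,
              abs_of_nonneg (inv_nonneg.mpr (norm_nonneg _)),
              inv_mul_cancel₀ (norm_ne_zero_iff.mpr (hx (ν n) (hν n)).2.1)]
        _ = ‖E‖ := mul_one _
    · have : Tendsto (fun n => lam0 - ν n) atTop (𝓝 (lam0 - lam0)) :=
        tendsto_const_nhds.sub hνlim
      rw [sub_self] at this
      simpa using (this.norm.mul_const ‖E‖)
end
end

section
/- Let P(λ) = λE − A be an operator pencil. (i) If P has a right approximate polynomial sequence, then there exist unit vectors x_n ∈ D(A) with A x_n → 0 and unit vectors y_n ∈ D(E) with E y_n → 0 as n → ∞. (ii) Conversely, if there exist unit vectors x_n ∈ D(E) ∩ D(A) with A x_n → 0 and E x_n → 0, then P has a right approximate polynomial sequence. -/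
open Filter Topology

noncomputable section

variable {X Y : Type*}
  [NormedAddCommGroup X] [InnerProductSpace ℂ X] [CompleteSpace X]
  [NormedAddCommGroup Y] [InnerProductSpace ℂ Y] [CompleteSpace Y]

/-- The polynomials `p_n(λ) = ∑_{j=0}^{k n} λ^j (a n j)` form a right approximate
polynomial sequence for the pencil `λE - A`: all values of `p_n` and of the reversals
`rev p_n` lie in `D(E) ∩ D(A)`, and for every `λ0 ∈ ℂ`: `p_n(λ0) ≠ 0`,
`rev p_n(λ0) ≠ 0`, neither `‖p_n(λ0)‖` nor `‖rev p_n(λ0)‖` converges to `0`, while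
`(λ0 E - A) p_n(λ0) → 0` and `(λ0 A - E) rev p_n(λ0) → 0`. -/
def IsRAPS (E A : X →ₗ.[ℂ] Y) (k : ℕ → ℕ) (a : ℕ → ℕ → X) : Prop :=
  (∀ (n : ℕ) (lam : ℂ),
      polyEval (a n) (k n) lam ∈ E.domain ∧ polyEval (a n) (k n) lam ∈ A.domain ∧
      revEval (a n) (k n) lam ∈ E.domain ∧ revEval (a n) (k n) lam ∈ A.domain) ∧
  ∀ lam : ℂ,
    (∀ n, polyEval (a n) (k n) lam ≠ 0) ∧
    (∀ n, revEval (a n) (k n) lam ≠ 0) ∧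
    ¬ Tendsto (fun n => ‖polyEval (a n) (k n) lam‖) atTop (𝓝 (0 : ℝ)) ∧
    ¬ Tendsto (fun n => ‖revEval (a n) (k n) lam‖) atTop (𝓝 (0 : ℝ)) ∧
    Tendsto (fun n => lam • pap E (polyEval (a n) (k n) lam) -
      pap A (polyEval (a n) (k n) lam)) atTop (𝓝 (0 : Y)) ∧
    Tendsto (fun n => lam • pap A (revEval (a n) (k n) lam) -
      pap E (revEval (a n) (k n) lam)) atTop (𝓝 (0 : Y))


lemma pap_mem (A : X →ₗ.[ℂ] Y) {v : X} (h : v ∈ A.domain) : pap A v = A ⟨v, h⟩ := by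
  unfold pap; rw [dif_pos h]

lemma pap_smul_s7 (A : X →ₗ.[ℂ] Y) (c : ℂ) {v : X} (h : v ∈ A.domain) :
    pap A (c • v) = c • pap A v := by
  rw [pap_mem A h, pap_mem A (A.domain.smul_mem c h)]
  have : (⟨c • v, A.domain.smul_mem c h⟩ : A.domain) = c • (⟨v, h⟩ : A.domain) := rfl
  rw [this]
  exact A.map_smul c ⟨v, h⟩

lemma extract_unit (B : X →ₗ.[ℂ] Y) {p : ℕ → X}
    (hdom : ∀ n, p n ∈ B.domain)
    (hnt : ¬ Tendsto (fun n => ‖p n‖) atTop (𝓝 (0 : ℝ)))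
    (hB : Tendsto (fun n => pap B (p n)) atTop (𝓝 (0 : Y))) :
    ∃ x : ℕ → X, (∀ n, x n ∈ B.domain) ∧ (∀ n, ‖x n‖ = 1) ∧
      Tendsto (fun n => pap B (x n)) atTop (𝓝 (0 : Y)) := by
  rw [Metric.tendsto_atTop] at hnt
  push_neg at hnt
  obtain ⟨ε, hε, hfreq⟩ := hnt
  have hf : ∃ᶠ n in atTop, ε ≤ ‖p n‖ := by
    rw [frequently_atTop]
    intro N
    obtain ⟨n, hn, hd⟩ := hfreq N
    exact ⟨n, hn, by simpa [Real.dist_eq, abs_of_nonneg (norm_nonneg _)] using hd⟩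
  obtain ⟨φ, hφ, hφε⟩ := Filter.extraction_of_frequently_atTop hf
  have hne : ∀ n, ‖p (φ n)‖ ≠ 0 := fun n => ne_of_gt (lt_of_lt_of_le hε (hφε n))
  refine ⟨fun n => (‖p (φ n)‖⁻¹ : ℂ) • p (φ n), fun n => B.domain.smul_mem _ (hdom _),
    fun n => ?_, ?_⟩
  · rw [norm_smul, norm_inv]
    simp [inv_mul_cancel₀ (hne n)]
  · have hg : Tendsto (fun n => ε⁻¹ * ‖pap B (p (φ n))‖) atTop (𝓝 (0 : ℝ)) := by
      have h1 := (hB.comp hφ.tendsto_atTop).norm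
      simpa using h1.const_mul ε⁻¹
    refine squeeze_zero_norm (fun n => ?_) hg
    show ‖pap B ((‖p (φ n)‖⁻¹ : ℂ) • p (φ n))‖ ≤ _
    rw [pap_smul_s7 B _ (hdom _), norm_smul, norm_inv]
    have : ‖(‖p (φ n)‖ : ℂ)‖⁻¹ = ‖p (φ n)‖⁻¹ := by simp
    rw [this]
    apply mul_le_mul_of_nonneg_right _ (norm_nonneg _)
    exact inv_anti₀ hε (hφε n)

/-- (i) If the pencil `λE - A` has a right approximate polynomial sequence, then there
are unit vectors `xₙ ∈ D(A)` with `A xₙ → 0` and unit vectors `yₙ ∈ D(E)` with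
`E yₙ → 0`. (ii) Conversely, if there are unit vectors `xₙ ∈ D(E) ∩ D(A)` with
`A xₙ → 0` and `E xₙ → 0`, then the pencil has a right approximate polynomial
sequence. -/
theorem stmt_7 (E A : X →ₗ.[ℂ] Y) :
    ((∃ (k : ℕ → ℕ) (a : ℕ → ℕ → X), IsRAPS E A k a) →
      (∃ x : ℕ → X, (∀ n, x n ∈ A.domain) ∧ (∀ n, ‖x n‖ = 1) ∧
        Tendsto (fun n => pap A (x n)) atTop (𝓝 (0 : Y))) ∧
      (∃ y : ℕ → X, (∀ n, y n ∈ E.domain) ∧ (∀ n, ‖y n‖ = 1) ∧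
        Tendsto (fun n => pap E (y n)) atTop (𝓝 (0 : Y)))) ∧
    ((∃ x : ℕ → X, (∀ n, x n ∈ E.domain ∧ x n ∈ A.domain) ∧ (∀ n, ‖x n‖ = 1) ∧
        Tendsto (fun n => pap A (x n)) atTop (𝓝 (0 : Y)) ∧
        Tendsto (fun n => pap E (x n)) atTop (𝓝 (0 : Y))) →
      ∃ (k : ℕ → ℕ) (a : ℕ → ℕ → X), IsRAPS E A k a) := by
  constructor
  · rintro ⟨k, a, hdom, hlam⟩
    obtain ⟨hp0, hq0, hpn, hqn, hPE, hPA⟩ := hlam 0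
    constructor
    · exact extract_unit A (fun n => (hdom n 0).2.1) hpn
        (by simpa using hPE.neg)
    · exact extract_unit E (fun n => (hdom n 0).2.2.1) hqn
        (by simpa using hPA.neg)
  · rintro ⟨x, hdom, hnorm, hA, hE⟩
    have hpe : ∀ (n : ℕ) (lam : ℂ), polyEval (fun _ => x n) 0 lam = x n := by
      intro n lam; simp [polyEval]
    have hre : ∀ (n : ℕ) (lam : ℂ), revEval (fun _ => x n) 0 lam = x n := by
      intro n lam; simp [revEval]
    have hne : ∀ n, x n ≠ 0 := by
      intro n h
      have := hnorm n
      rw [h, norm_zero] at this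
      exact one_ne_zero this.symm
    have hnt : ¬ Tendsto (fun n => ‖x n‖) atTop (𝓝 (0 : ℝ)) := by
      intro h
      have h1 : Tendsto (fun _ : ℕ => (1 : ℝ)) atTop (𝓝 0) := by
        have : (fun n => ‖x n‖) = fun _ : ℕ => (1 : ℝ) := funext hnorm
        rwa [this] at h
      exact one_ne_zero (tendsto_nhds_unique tendsto_const_nhds h1)
    refine ⟨fun _ => 0, fun n _ => x n, ?_, ?_⟩
    · intro n lam
      rw [hpe, hre]
      exact ⟨(hdom n).1, (hdom n).2, (hdom n).1, (hdom n).2⟩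
    · intro lam
      refine ⟨fun n => by rw [hpe]; exact hne n,
        fun n => by rw [hre]; exact hne n,
        by simpa only [hpe] using hnt,
        by simpa only [hre] using hnt, ?_, ?_⟩
      · simp only [hpe]
        simpa using (hE.const_smul lam).sub hA
      · simp only [hre]
        simpa using (hA.const_smul lam).sub hE
end
end

section
/- Consider the dissipative Hamiltonian operator pencil P(λ) = λE − BQ. Let λ0 ∈ ℂ with Re λ0 > 0 and let (x_n) be a bounded sequence with x_n ∈ D(BQ) for all n. Then (λ0E − BQ)x_n → 0 as n → ∞ if and only if both E x_n → 0 and BQ x_n → 0 as n → ∞. In particular, ker(λ0E − BQ) = {x ∈ D(BQ) : Ex = 0 and BQx = 0}. -/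
open Filter Topology
open scoped InnerProductSpace

noncomputable section

variable {X Y : Type*}
  [NormedAddCommGroup X] [InnerProductSpace ℂ X] [CompleteSpace X]
  [NormedAddCommGroup Y] [InnerProductSpace ℂ Y] [CompleteSpace Y]

/-- Application of the composition `BQ` (with domain `{x | Qx ∈ D(B)}`),
extended by `0` outside the domain. -/
noncomputable def BQap (Q : X →L[ℂ] Y) (B : Y →ₗ.[ℂ] Y) (x : X) : Y :=
  haveI := Classical.dec (Q x ∈ B.domain)
  if h : Q x ∈ B.domain then B ⟨Q x, h⟩ else 0

lemma key_cs (T : X →L[ℂ] X) (hsa : IsSelfAdjoint T)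
    (hnn : ∀ x, 0 ≤ (⟪T x, x⟫_ℂ).re) (x : X) :
    ‖T x‖ ^ 2 ≤ ‖T‖ * (⟪T x, x⟫_ℂ).re := by
  have hsym : ∀ u v : X, ⟪T u, v⟫_ℂ = ⟪u, T v⟫_ℂ :=
    ContinuousLinearMap.isSelfAdjoint_iff_isSymmetric.mp hsa
  have cs := @InnerProductSpace.Core.inner_mul_inner_self_le ℂ X _ _ _
    { inner := fun u v => ⟪T u, v⟫_ℂ
      conj_inner_symm := fun u v => by
        show (starRingEnd ℂ) ⟪T v, u⟫_ℂ = ⟪T u, v⟫_ℂ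
        rw [inner_conj_symm, ← hsym]
      re_inner_nonneg := hnn
      add_left := fun u v w => by simp [inner_add_left]
      smul_left := fun u v r => by simp [inner_smul_left, mul_comm] } (T x) x
  change ‖⟪T (T x), x⟫_ℂ‖ * ‖⟪T x, T x⟫_ℂ‖ ≤ (⟪T (T x), T x⟫_ℂ).re * (⟪T x, x⟫_ℂ).re at cs
  have h1 : ⟪T (T x), x⟫_ℂ = ⟪T x, T x⟫_ℂ := hsym (T x) x
  have h2 : ‖⟪T x, T x⟫_ℂ‖ = ‖T x‖ ^ 2 := by
    rw [inner_self_eq_norm_sq_to_K]; push_cast; simp [sq_abs]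
  have h3 : (⟪T (T x), T x⟫_ℂ).re ≤ ‖T‖ * ‖T x‖ ^ 2 := by
    calc (⟪T (T x), T x⟫_ℂ).re ≤ ‖⟪T (T x), T x⟫_ℂ‖ := Complex.re_le_norm _
      _ ≤ ‖T (T x)‖ * ‖T x‖ := norm_inner_le_norm _ _
      _ ≤ (‖T‖ * ‖T x‖) * ‖T x‖ :=
          mul_le_mul_of_nonneg_right (T.le_opNorm _) (norm_nonneg _)
      _ = ‖T‖ * ‖T x‖ ^ 2 := by ring
  rw [h1, h2] at cs
  rcases eq_or_lt_of_le (norm_nonneg (T x)) with h0 | h0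
  · rw [← h0]; simpa using mul_nonneg (norm_nonneg T) (hnn x)
  · have hp : (0:ℝ) < ‖T x‖ ^ 2 := by positivity
    nlinarith [hnn x, cs, h3]

/-- For the dissipative Hamiltonian pencil `P(λ) = λE - BQ` and `Re λ0 > 0`, a bounded
sequence `xₙ ∈ D(BQ)` satisfies `(λ0 E - BQ) xₙ → 0` iff `E xₙ → 0` and `BQ xₙ → 0`;
in particular `ker (λ0 E - BQ) = ker E ∩ ker BQ` (within `D(BQ)`). -/
theorem stmt_13 (E Q : X →L[ℂ] Y) (B : Y →ₗ.[ℂ] Y)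
    (hQinv : ∃ Qi : Y →L[ℂ] X, (∀ x, Qi (Q x) = x) ∧ (∀ y, Q (Qi y) = y))
    (hQE : IsSelfAdjoint ((ContinuousLinearMap.adjoint Q).comp E))
    (hQEnn : ∀ x : X, 0 ≤ (⟪((ContinuousLinearMap.adjoint Q).comp E) x, x⟫_ℂ).re)
    (hBdense : Dense (B.domain : Set Y)) (hBclosed : IsClosed (B.graph : Set (Y × Y)))
    (hBdiss : ∀ y : B.domain, (⟪B y, (y : Y)⟫_ℂ).re ≤ 0)
    (lam0 : ℂ) (hlam0 : 0 < lam0.re)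
    (x : ℕ → X) (hx : ∀ n, Q (x n) ∈ B.domain)
    (hbdd : ∃ C : ℝ, ∀ n, ‖x n‖ ≤ C) :
    (Tendsto (fun n => lam0 • E (x n) - BQap Q B (x n)) atTop (𝓝 (0 : Y)) ↔
      Tendsto (fun n => E (x n)) atTop (𝓝 (0 : Y)) ∧
      Tendsto (fun n => BQap Q B (x n)) atTop (𝓝 (0 : Y))) ∧
    (∀ v : X, Q v ∈ B.domain →
      (lam0 • E v - BQap Q B v = 0 ↔ E v = 0 ∧ BQap Q B v = 0)) := by
  obtain ⟨Qi, hQi1, hQi2⟩ := hQinv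
  set T : X →L[ℂ] X := (ContinuousLinearMap.adjoint Q).comp E with hT
  have hsym : ∀ u v : X, ⟪T u, v⟫_ℂ = ⟪u, T v⟫_ℂ :=
    ContinuousLinearMap.isSelfAdjoint_iff_isSymmetric.mp hQE
  -- E recovered from T
  have hE : ∀ v : X, ContinuousLinearMap.adjoint Qi (T v) = E v := by
    intro v
    have h1 : T v = ContinuousLinearMap.adjoint Q (E v) := rfl
    have h2 : Q.comp Qi = ContinuousLinearMap.id ℂ Y := by
      ext y; simp [hQi2]
    calc ContinuousLinearMap.adjoint Qi (ContinuousLinearMap.adjoint Q (E v))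
        = (ContinuousLinearMap.adjoint (Q.comp Qi)) (E v) := by
          rw [ContinuousLinearMap.adjoint_comp]; rfl
      _ = E v := by rw [h2, ContinuousLinearMap.adjoint_id]; rfl
  -- the inner product ⟪T v, v⟫ is real
  have hreal : ∀ v : X, (⟪T v, v⟫_ℂ).im = 0 := by
    intro v
    have h := hsym v v
    have h2 : (starRingEnd ℂ) ⟪v, T v⟫_ℂ = ⟪v, T v⟫_ℂ := by rw [inner_conj_symm, h]
    rw [h]
    exact Complex.conj_eq_iff_im.mp h2
  -- key pointwise estimate
  have hkey : ∀ v : X, Q v ∈ B.domain →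
      lam0.re * (⟪T v, v⟫_ℂ).re ≤ ‖lam0 • E v - BQap Q B v‖ * (‖Q‖ * ‖v‖) := by
    intro v hv
    have hBQ : BQap Q B v = B ⟨Q v, hv⟩ := dif_pos hv
    have hEQ : ⟪E v, Q v⟫_ℂ = ⟪T v, v⟫_ℂ := by
      rw [hT]; simp [ContinuousLinearMap.adjoint_inner_left]
    have hcalc : (⟪lam0 • E v - BQap Q B v, Q v⟫_ℂ).re
        = lam0.re * (⟪T v, v⟫_ℂ).re - (⟪B ⟨Q v, hv⟩, Q v⟫_ℂ).re := by
      rw [inner_sub_left, inner_smul_left, hEQ, hBQ]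
      simp [Complex.mul_re, hreal v]
    have hdiss := hBdiss ⟨Q v, hv⟩
    have h1 : lam0.re * (⟪T v, v⟫_ℂ).re ≤ (⟪lam0 • E v - BQap Q B v, Q v⟫_ℂ).re := by
      rw [hcalc]; simpa using hdiss
    calc lam0.re * (⟪T v, v⟫_ℂ).re ≤ (⟪lam0 • E v - BQap Q B v, Q v⟫_ℂ).re := h1
      _ ≤ ‖⟪lam0 • E v - BQap Q B v, Q v⟫_ℂ‖ := Complex.re_le_norm _
      _ ≤ ‖lam0 • E v - BQap Q B v‖ * ‖Q v‖ := norm_inner_le_norm _ _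
      _ ≤ ‖lam0 • E v - BQap Q B v‖ * (‖Q‖ * ‖v‖) :=
          mul_le_mul_of_nonneg_left (Q.le_opNorm v) (norm_nonneg _)
  -- general sequential statement
  have main : ∀ (z : ℕ → X), (∀ n, Q (z n) ∈ B.domain) → (∃ C : ℝ, ∀ n, ‖z n‖ ≤ C) →
      (Tendsto (fun n => lam0 • E (z n) - BQap Q B (z n)) atTop (𝓝 (0 : Y)) ↔
        Tendsto (fun n => E (z n)) atTop (𝓝 (0 : Y)) ∧
        Tendsto (fun n => BQap Q B (z n)) atTop (𝓝 (0 : Y))) := by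
    intro z hz ⟨C, hC⟩
    constructor
    · intro hP
      have hC0 : 0 ≤ C := le_trans (norm_nonneg _) (hC 0)
      have hPn : Tendsto (fun n => ‖lam0 • E (z n) - BQap Q B (z n)‖) atTop (𝓝 0) := by
        simpa using hP.norm
      -- ⟪T z n, z n⟫.re → 0
      have hgnn : ∀ n, 0 ≤ (⟪T (z n), z n⟫_ℂ).re := fun n => hQEnn (z n)
      have hub : Tendsto (fun n => ‖lam0 • E (z n) - BQap Q B (z n)‖ * (‖Q‖ * C) / lam0.re)
          atTop (𝓝 0) := by
        have := (hPn.mul_const (‖Q‖ * C)).div_const lam0.re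
        simpa using this
      have hg : Tendsto (fun n => (⟪T (z n), z n⟫_ℂ).re) atTop (𝓝 0) := by
        apply squeeze_zero hgnn _ hub
        intro n
        rw [le_div_iff₀ hlam0, mul_comm]
        calc lam0.re * (⟪T (z n), z n⟫_ℂ).re
            ≤ ‖lam0 • E (z n) - BQap Q B (z n)‖ * (‖Q‖ * ‖z n‖) := hkey (z n) (hz n)
          _ ≤ ‖lam0 • E (z n) - BQap Q B (z n)‖ * (‖Q‖ * C) := by
              apply mul_le_mul_of_nonneg_left _ (norm_nonneg _)
              exact mul_le_mul_of_nonneg_left (hC n) (norm_nonneg Q)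
      -- T z n → 0
      have hTsq : Tendsto (fun n => ‖T (z n)‖ ^ 2) atTop (𝓝 0) := by
        apply squeeze_zero (fun n => by positivity)
          (fun n => key_cs T hQE hQEnn (z n)) (by simpa using hg.const_mul ‖T‖)
      have hTz : Tendsto (fun n => T (z n)) atTop (𝓝 0) := by
        rw [tendsto_zero_iff_norm_tendsto_zero]
        have := hTsq.sqrt
        simpa [Real.sqrt_sq (norm_nonneg _)] using this
      -- E z n → 0
      have hEz : Tendsto (fun n => E (z n)) atTop (𝓝 0) := by
        have := ((ContinuousLinearMap.adjoint Qi).continuous.tendsto 0).comp hTz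
        simpa [Function.comp_def, hE] using this
      refine ⟨hEz, ?_⟩
      have := (hEz.const_smul lam0).sub hP
      simpa using this
    · rintro ⟨h1, h2⟩
      have := (h1.const_smul lam0).sub h2
      simpa using this
  refine ⟨main x hx hbdd, ?_⟩
  intro v hv
  have := main (fun _ => v) (fun _ => hv) ⟨‖v‖, fun _ => le_refl _⟩
  simpa [tendsto_const_nhds_iff] using this
end
end

section
/- Consider the dissipative Hamiltonian operator pencil P(λ) = λE − BQ. The following four conditions are equivalent: (a) every λ0 ∈ ℂ is a point singularity of P and there exists a nonzero x ∈ D(BQ) with Ex = 0; (b) there exists λ0 ∈ ℂ with Re λ0 > 0 that is a point singularity of P; (c) there exists a nonzero x ∈ D(BQ) with Ex = 0 and BQx = 0; (d) P has a right singular polynomial, i.e., a nonzero X-valued polynomial p with p(λ0) ∈ D(BQ) and (λ0E − BQ)p(λ0) = 0 for every λ0 ∈ ℂ. -/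
open Filter Topology
open scoped InnerProductSpace

noncomputable section

variable {X Y : Type*}
  [NormedAddCommGroup X] [InnerProductSpace ℂ X] [CompleteSpace X]
  [NormedAddCommGroup Y] [InnerProductSpace ℂ Y] [CompleteSpace Y]

/-- `lam` is a point singularity of the pencil `P(λ) = λE - BQ`: there is a nonzero
`x ∈ D(BQ)` with `(λ E - BQ) x = 0`. -/
def IsPointSingularity (E Q : X →L[ℂ] Y) (B : Y →ₗ.[ℂ] Y) (lam : ℂ) : Prop :=
  ∃ x : X, Q x ∈ B.domain ∧ x ≠ 0 ∧ lam • E x - BQap Q B x = 0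

lemma aux_pos_kill {X : Type*} [NormedAddCommGroup X] [InnerProductSpace ℂ X] [CompleteSpace X]
    (T : X →L[ℂ] X) (hsa : IsSelfAdjoint T)
    (hnn : ∀ z, 0 ≤ (⟪T z, z⟫_ℂ).re) (x : X) (hx : ⟪T x, x⟫_ℂ = 0) : T x = 0 := by
  have key : ∀ y : X, ⟪T x, y⟫_ℂ = 0 := by
    intro y
    by_contra hz
    set z : ℂ := ⟪T x, y⟫_ℂ with hzdef
    set w : ℝ := (⟪T y, y⟫_ℂ).re with hwdef
    set s : ℝ := Complex.normSq z with hsdef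
    have hs : 0 < s := Complex.normSq_pos.mpr hz
    have hw0 : 0 ≤ w := hnn y
    set t : ℝ := 1 / (w + 1) with htdef
    have ht0 : 0 < t := by positivity
    set c : ℂ := -(t : ℂ) * starRingEnd ℂ z with hcdef
    have hTyx : ⟪T y, x⟫_ℂ = starRingEnd ℂ z := by
      have h1 : ⟪T y, x⟫_ℂ = ⟪y, T x⟫_ℂ := hsa.isSymmetric y x
      rw [h1, hzdef, ← inner_conj_symm]
    have hexp : ⟪T (x + c • y), x + c • y⟫_ℂ
        = c * z + starRingEnd ℂ (c * z) + (starRingEnd ℂ c * c) * ⟪T y, y⟫_ℂ := by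
      simp only [map_add, map_smul, inner_add_left, inner_add_right, inner_smul_left,
        inner_smul_right, hx, hTyx, ← hzdef, map_mul, map_neg, Complex.conj_conj,
        Complex.conj_ofReal]
      ring
    have hcz : c * z = ((-t * s : ℝ) : ℂ) := by
      rw [hcdef, hsdef]
      push_cast
      rw [mul_assoc, mul_comm (starRingEnd ℂ z) z, Complex.mul_conj]
    have hcc : starRingEnd ℂ c * c = ((t * t * s : ℝ) : ℂ) := by
      have : starRingEnd ℂ c * c = (Complex.normSq c : ℂ) := by
        rw [mul_comm, Complex.mul_conj]
      rw [this, hcdef]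
      push_cast
      rw [map_mul, Complex.normSq_neg, Complex.normSq_conj, Complex.normSq_ofReal, hsdef]
      push_cast
      ring
    have hre : (⟪T (x + c • y), x + c • y⟫_ℂ).re = -2 * (t * s) + t * t * s * w := by
      rw [hexp, hcz, hcc]
      simp [Complex.add_re, Complex.ofReal_mul, Complex.mul_re, ← hwdef]
      ring
    have hge := hnn (x + c • y)
    rw [hre] at hge
    have htw : t * w < 1 := by
      rw [htdef, div_mul_eq_mul_div, div_lt_one (by linarith)]
      linarith
    nlinarith [mul_pos ht0 hs, mul_pos (mul_pos ht0 ht0) hs]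
  have := key (T x)
  rwa [inner_self_eq_zero] at this

/-- (b) implies (c). -/
lemma core_b_to_c (E Q : X →L[ℂ] Y) (B : Y →ₗ.[ℂ] Y)
    (hQinv : ∃ Qi : Y →L[ℂ] X, (∀ x, Qi (Q x) = x) ∧ (∀ y, Q (Qi y) = y))
    (hQE : IsSelfAdjoint ((ContinuousLinearMap.adjoint Q).comp E))
    (hQEnn : ∀ x : X, 0 ≤ (⟪((ContinuousLinearMap.adjoint Q).comp E) x, x⟫_ℂ).re)
    (hBdiss : ∀ y : B.domain, (⟪B y, (y : Y)⟫_ℂ).re ≤ 0)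
    (hb : ∃ lam0 : ℂ, 0 < lam0.re ∧ IsPointSingularity E Q B lam0) :
    ∃ x : X, Q x ∈ B.domain ∧ x ≠ 0 ∧ E x = 0 ∧ BQap Q B x = 0 := by
  obtain ⟨lam0, hre, x, hdom, hx, heq⟩ := hb
  set T := (ContinuousLinearMap.adjoint Q).comp E with hT
  have hBQ : BQap Q B x = B ⟨Q x, hdom⟩ := dif_pos hdom
  have hBeq : (B ⟨Q x, hdom⟩ : Y) = lam0 • E x := by
    have h := sub_eq_zero.mp heq
    rw [hBQ] at h
    exact h.symm
  have hTx_inner : ⟪T x, x⟫_ℂ = ⟪E x, Q x⟫_ℂ := by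
    rw [hT]
    exact ContinuousLinearMap.adjoint_inner_left Q x (E x)
  set t : ℂ := ⟪T x, x⟫_ℂ with htdef
  have htim : t.im = 0 := by
    have h1 : t = starRingEnd ℂ t := by
      have h2 : ⟪T x, x⟫_ℂ = ⟪x, T x⟫_ℂ := hQE.isSymmetric x x
      rw [htdef]
      nth_rewrite 1 [h2]
      rw [← inner_conj_symm]
    have h3 := congrArg Complex.im h1
    simp only [Complex.conj_im] at h3
    linarith
  have htre : 0 ≤ t.re := hQEnn x
  have hdiss := hBdiss ⟨Q x, hdom⟩
  have hinner : ⟪(B ⟨Q x, hdom⟩ : Y), ((⟨Q x, hdom⟩ : B.domain) : Y)⟫_ℂ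
      = starRingEnd ℂ lam0 * t := by
    show ⟪(B ⟨Q x, hdom⟩ : Y), Q x⟫_ℂ = _
    rw [hBeq, inner_smul_left, ← hTx_inner]
  rw [hinner] at hdiss
  have hre2 : (starRingEnd ℂ lam0 * t).re = lam0.re * t.re + lam0.im * t.im := by
    simp [Complex.mul_re]
  rw [hre2, htim, mul_zero, add_zero] at hdiss
  have htre0 : t.re = 0 := by nlinarith
  have ht0 : t = 0 := Complex.ext htre0 htim
  have hTx0 : T x = 0 := aux_pos_kill T hQE hQEnn x (htdef ▸ ht0)
  obtain ⟨Qi, hQi1, hQi2⟩ := hQinv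
  have hEx : E x = 0 := by
    have h3 : ⟪E x, E x⟫_ℂ = 0 := by
      calc ⟪E x, E x⟫_ℂ = ⟪E x, Q (Qi (E x))⟫_ℂ := by rw [hQi2]
        _ = ⟪ContinuousLinearMap.adjoint Q (E x), Qi (E x)⟫_ℂ :=
            (ContinuousLinearMap.adjoint_inner_left Q (Qi (E x)) (E x)).symm
        _ = ⟪T x, Qi (E x)⟫_ℂ := rfl
        _ = 0 := by rw [hTx0, inner_zero_left]
    exact inner_self_eq_zero.mp h3
  refine ⟨x, hdom, hx, hEx, ?_⟩
  have : BQap Q B x = lam0 • E x := by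
    rw [hBQ]; exact hBeq
  rw [this, hEx, smul_zero]

/-- (d) implies (b). -/
lemma core_d_to_b (E Q : X →L[ℂ] Y) (B : Y →ₗ.[ℂ] Y)
    (hd : ∃ (k : ℕ) (a : ℕ → X), (∃ j ≤ k, a j ≠ 0) ∧
        ∀ lam : ℂ, Q (polyEval a k lam) ∈ B.domain ∧
          lam • E (polyEval a k lam) - BQap Q B (polyEval a k lam) = 0) :
    ∃ lam0 : ℂ, 0 < lam0.re ∧ IsPointSingularity E Q B lam0 := by
  obtain ⟨k, a, ⟨j0, hj0le, hj0ne⟩, hall⟩ := hd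
  set q : Polynomial ℂ :=
    ∑ j ∈ Finset.range (k + 1), Polynomial.C (⟪a j0, a j⟫_ℂ) * Polynomial.X ^ j with hqdef
  have hcoeff : q.coeff j0 = ⟪a j0, a j0⟫_ℂ := by
    rw [hqdef, Polynomial.finset_sum_coeff]
    rw [Finset.sum_eq_single j0]
    · rw [Polynomial.coeff_C_mul, Polynomial.coeff_X_pow]; simp
    · intro b _ hb
      simp [Polynomial.coeff_C_mul, Polynomial.coeff_X_pow, Ne.symm hb]
    · intro hnot
      exact absurd (Finset.mem_range.mpr (Nat.lt_succ_of_le hj0le)) hnot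
  have hq0 : q ≠ 0 := by
    intro h
    rw [h, Polynomial.coeff_zero] at hcoeff
    exact hj0ne (inner_self_eq_zero.mp hcoeff.symm)
  have heval : ∀ lam : ℂ, q.eval lam = ⟪a j0, polyEval a k lam⟫_ℂ := by
    intro lam
    rw [hqdef, Polynomial.eval_finset_sum, polyEval, inner_sum]
    refine Finset.sum_congr rfl fun j _ => ?_
    rw [inner_smul_right, Polynomial.eval_mul, Polynomial.eval_pow, Polynomial.eval_C,
      Polynomial.eval_X, mul_comm]
  have hfin : {lam : ℂ | q.IsRoot lam}.Finite := Polynomial.finite_setOf_isRoot hq0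
  have hinf : {lam : ℂ | 0 < lam.re}.Infinite := by
    refine Set.infinite_of_injective_forall_mem (f := fun n : ℕ => ((n : ℂ) + 1)) ?_ ?_
    · intro m n hmn
      have h := congrArg Complex.re hmn
      simp only [Complex.add_re, Complex.natCast_re, Complex.one_re, add_left_inj] at h
      exact_mod_cast h
    · intro n
      simp only [Set.mem_setOf_eq, Complex.add_re, Complex.natCast_re, Complex.one_re]
      positivity
  obtain ⟨lam, hlam⟩ := (hinf.diff hfin).nonempty
  refine ⟨lam, hlam.1, polyEval a k lam, (hall lam).1, ?_, (hall lam).2⟩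
  intro hzero
  apply hlam.2
  simp only [Set.mem_setOf_eq, Polynomial.IsRoot, heval lam, hzero, inner_zero_right]

/-- For the dissipative Hamiltonian pencil `P(λ) = λE - BQ` the following are
equivalent: (a) every `λ0 ∈ ℂ` is a point singularity and `∞` is a point singularity;
(b) some `λ0` with `Re λ0 > 0` is a point singularity; (c) there is a nonzero
`x ∈ D(BQ)` with `Ex = 0` and `BQx = 0`; (d) `P` has a right singular polynomial. -/
theorem stmt_15 (E Q : X →L[ℂ] Y) (B : Y →ₗ.[ℂ] Y)
    (hQinv : ∃ Qi : Y →L[ℂ] X, (∀ x, Qi (Q x) = x) ∧ (∀ y, Q (Qi y) = y))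
    (hQE : IsSelfAdjoint ((ContinuousLinearMap.adjoint Q).comp E))
    (hQEnn : ∀ x : X, 0 ≤ (⟪((ContinuousLinearMap.adjoint Q).comp E) x, x⟫_ℂ).re)
    (hBdense : Dense (B.domain : Set Y)) (hBclosed : IsClosed (B.graph : Set (Y × Y)))
    (hBdiss : ∀ y : B.domain, (⟪B y, (y : Y)⟫_ℂ).re ≤ 0) :
    (((∀ lam0 : ℂ, IsPointSingularity E Q B lam0) ∧
        (∃ x : X, Q x ∈ B.domain ∧ x ≠ 0 ∧ E x = 0)) ↔
      (∃ lam0 : ℂ, 0 < lam0.re ∧ IsPointSingularity E Q B lam0)) ∧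
    ((∃ lam0 : ℂ, 0 < lam0.re ∧ IsPointSingularity E Q B lam0) ↔
      (∃ x : X, Q x ∈ B.domain ∧ x ≠ 0 ∧ E x = 0 ∧ BQap Q B x = 0)) ∧
    ((∃ x : X, Q x ∈ B.domain ∧ x ≠ 0 ∧ E x = 0 ∧ BQap Q B x = 0) ↔
      (∃ (k : ℕ) (a : ℕ → X), (∃ j ≤ k, a j ≠ 0) ∧
        ∀ lam : ℂ, Q (polyEval a k lam) ∈ B.domain ∧
          lam • E (polyEval a k lam) - BQap Q B (polyEval a k lam) = 0)) := by
  have b2c := core_b_to_c E Q B hQinv hQE hQEnn hBdiss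
  have c2b : (∃ x : X, Q x ∈ B.domain ∧ x ≠ 0 ∧ E x = 0 ∧ BQap Q B x = 0) →
      ∃ lam0 : ℂ, 0 < lam0.re ∧ IsPointSingularity E Q B lam0 := by
    rintro ⟨x, hd, hx, hE, hB⟩
    exact ⟨1, by norm_num, x, hd, hx, by rw [hE, hB]; simp⟩
  refine ⟨⟨fun ha => ⟨1, by norm_num, ha.1 1⟩, fun hb => ?_⟩, ⟨b2c, c2b⟩,
    ⟨fun hc => ?_, fun hd => b2c (core_d_to_b E Q B hd)⟩⟩
  · obtain ⟨x, hd, hx, hE, hB⟩ := b2c hb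
    exact ⟨fun lam => ⟨x, hd, hx, by rw [hE, hB]; simp⟩, ⟨x, hd, hx, hE⟩⟩
  · obtain ⟨x, hd, hx, hE, hB⟩ := hc
    refine ⟨0, fun _ => x, ⟨0, le_refl 0, hx⟩, fun lam => ?_⟩
    have hpe : polyEval (fun _ => x) 0 lam = x := by
      rw [polyEval, Finset.sum_range_one]
      simp
    rw [hpe]
    exact ⟨hd, by rw [hE, hB]; simp⟩
end
end

section
/- Consider the dissipative Hamiltonian operator pencil P(λ) = λE − BQ. The following three conditions are equivalent: (a) there exists λ0 ∈ ℂ such that λ0E − BQ : D(BQ) → Y is bijective with bounded inverse, and B is maximally dissipative; (b) for every λ0 ∈ ℂ with Re λ0 > 0 the operator λ0E − BQ : D(BQ) → Y is bijective with bounded inverse; (c) there exists λ0 ∈ ℂ with Re λ0 > 0 such that λ0E − BQ : D(BQ) → Y is bijective with bounded inverse. -/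
open Filter Topology
open scoped InnerProductSpace

noncomputable section

variable {X Y : Type*}
  [NormedAddCommGroup X] [InnerProductSpace ℂ X] [CompleteSpace X]
  [NormedAddCommGroup Y] [InnerProductSpace ℂ Y] [CompleteSpace Y]

/-- `B` is a dissipative operator in `Y`: `Re ⟨By, y⟩ ≤ 0` for all `y ∈ D(B)`. -/
def Dissipative (B : Y →ₗ.[ℂ] Y) : Prop :=
  ∀ y : B.domain, (⟪B y, (y : Y)⟫_ℂ).re ≤ 0

/-- `B` is maximally dissipative: it is dissipative and every dissipative extension of
`B` has the same domain. -/
def MaxDissipative (B : Y →ₗ.[ℂ] Y) : Prop :=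
  Dissipative B ∧
  ∀ B' : Y →ₗ.[ℂ] Y, Dissipative B' →
    (B.domain : Set Y) ⊆ (B'.domain : Set Y) →
    (∀ (y : Y) (hy : y ∈ B.domain) (hy' : y ∈ B'.domain), B ⟨y, hy⟩ = B' ⟨y, hy'⟩) →
    B'.domain = B.domain

/-- `lam` is a regular point of the pencil `P(λ) = λE - BQ`: the operator
`λE - BQ : D(BQ) → Y` is bijective with bounded inverse. -/
def RegAt (E Q : X →L[ℂ] Y) (B : Y →ₗ.[ℂ] Y) (lam : ℂ) : Prop :=
  ∃ T : Y →L[ℂ] X,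
    (∀ v : X, Q v ∈ B.domain → T (lam • E v - BQap Q B v) = v) ∧
    (∀ y : Y, Q (T y) ∈ B.domain ∧ lam • E (T y) - BQap Q B (T y) = y)

/-- The analogue of `RegAt` for the reduced pencil `λ G - B` on `Y`. -/
def RegY (G : Y →L[ℂ] Y) (B : Y →ₗ.[ℂ] Y) (lam : ℂ) : Prop :=
  ∃ S : Y →L[ℂ] Y,
    (∀ u : B.domain, S (lam • G u - B u) = (u : Y)) ∧
    (∀ y : Y, ∃ h : S y ∈ B.domain, lam • G (S y) - B ⟨S y, h⟩ = y)

section Ylemmas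

variable (G : Y →L[ℂ] Y) (B : Y →ₗ.[ℂ] Y)

/-- `⟪G y, y⟫` is real for a symmetric `G`. -/
lemma Greal (hGsym : ∀ y z : Y, ⟪G y, z⟫_ℂ = ⟪y, G z⟫_ℂ) (y : Y) :
    ⟪G y, y⟫_ℂ = ((⟪G y, y⟫_ℂ).re : ℂ) := by
  have h : (starRingEnd ℂ) ⟪G y, y⟫_ℂ = ⟪G y, y⟫_ℂ := by
    rw [inner_conj_symm]
    exact (hGsym y y).symm
  exact ((Complex.conj_eq_iff_re).1 h).symm

/-- The Cauchy-Schwarz type bound `‖G u‖² ≤ ‖G‖ ⟪G u, u⟫` for nonnegative `G`. -/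
lemma Gsq (hGsym : ∀ y z : Y, ⟪G y, z⟫_ℂ = ⟪y, G z⟫_ℂ)
    (hGnn : ∀ y : Y, 0 ≤ (⟪G y, y⟫_ℂ).re) (u : Y) :
    ‖G u‖ ^ 2 ≤ ‖G‖ * (⟪G u, u⟫_ℂ).re := by
  set a : ℝ := (⟪G (G u), G u⟫_ℂ).re with ha_def
  set c : ℝ := (⟪G u, u⟫_ℂ).re with hc_def
  have expand : ∀ t : ℝ, (⟪G (u + (t : ℂ) • G u), u + (t : ℂ) • G u⟫_ℂ).re
      = a * (t * t) + (2 * ‖G u‖ ^ 2) * t + c := by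
    intro t
    have h1 : ⟪G (u + (t : ℂ) • G u), u + (t : ℂ) • G u⟫_ℂ
        = ⟪G u, u⟫_ℂ + (t : ℂ) * ⟪G u, G u⟫_ℂ + (t : ℂ) * ⟪G (G u), u⟫_ℂ
          + (t : ℂ) * (t : ℂ) * ⟪G (G u), G u⟫_ℂ := by
      simp only [map_add, map_smul, inner_add_left, inner_add_right, inner_smul_left,
        inner_smul_right, Complex.conj_ofReal]
      ring
    rw [hGsym (G u) u] at h1
    have h3 : ⟪G u, G u⟫_ℂ = ((‖G u‖ ^ 2 : ℝ) : ℂ) := by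
      rw [inner_self_eq_norm_sq_to_K]; norm_cast
    rw [h3] at h1
    rw [h1]
    simp only [Complex.add_re, Complex.mul_re, Complex.ofReal_re, Complex.ofReal_im,
      Complex.mul_im, mul_zero, zero_mul, sub_zero, add_zero, zero_add]
    rw [ha_def, hc_def]
    ring
  have hd := discrim_le_zero (fun t => by rw [← expand t]; exact hGnn _)
  have hd' : (2 * ‖G u‖ ^ 2) ^ 2 - 4 * a * c ≤ 0 := by simpa [discrim] using hd
  have ha : a ≤ ‖G‖ * (‖G u‖ * ‖G u‖) := by
    have h1 : a ≤ ‖⟪G (G u), G u⟫_ℂ‖ := by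
      exact Complex.re_le_norm _
    have h2 : ‖⟪G (G u), G u⟫_ℂ‖ ≤ ‖G (G u)‖ * ‖G u‖ := norm_inner_le_norm _ _
    have h3 : ‖G (G u)‖ ≤ ‖G‖ * ‖G u‖ := G.le_opNorm _
    nlinarith [norm_nonneg (G u)]
  have hc : 0 ≤ c := hGnn u
  have hGn : 0 ≤ ‖G‖ := norm_nonneg _
  have hw : (0 : ℝ) ≤ ‖G u‖ := norm_nonneg _
  rcases eq_or_lt_of_le hw with h0 | h0
  · rw [← h0]
    simpa using mul_nonneg hGn hc
  · have key : ‖G u‖ ^ 2 * ‖G u‖ ^ 2 ≤ ‖G‖ * ‖G u‖ ^ 2 * c := by nlinarith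
    nlinarith [mul_pos h0 h0]

/-- The a priori injectivity bound for `λ G - B` in the right half plane, given a
bounded left inverse at some `λ₀`. -/
lemma inj_bound (hGsym : ∀ y z : Y, ⟪G y, z⟫_ℂ = ⟪y, G z⟫_ℂ)
    (hGnn : ∀ y : Y, 0 ≤ (⟪G y, y⟫_ℂ).re) (hBdiss : Dissipative B)
    (lam0 lam : ℂ) (hlam : 0 < lam.re) (R0 : Y →L[ℂ] Y)
    (hR0 : ∀ u : B.domain, R0 (lam0 • G u - B u) = (u : Y)) (u : B.domain) :
    ‖(u : Y)‖ ≤ ((2 * ‖R0‖ * lam.re + 2 * ‖R0‖ ^ 2 * ‖lam - lam0‖ ^ 2 * ‖G‖) / lam.re) *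
      ‖lam • G u - B u‖ := by
  set f := lam • G (u : Y) - B u with hf
  have hreal := Greal G hGsym (u : Y)
  have hγ : 0 ≤ (⟪G (u : Y), (u : Y)⟫_ℂ).re := hGnn _
  have h1 : lam.re * (⟪G (u : Y), (u : Y)⟫_ℂ).re ≤ ‖f‖ * ‖(u : Y)‖ := by
    have e1 : ⟪f, (u : Y)⟫_ℂ
        = (starRingEnd ℂ) lam * ⟪G (u : Y), (u : Y)⟫_ℂ - ⟪B u, (u : Y)⟫_ℂ := by
      rw [hf, inner_sub_left, inner_smul_left]
    have e2 : (⟪f, (u : Y)⟫_ℂ).re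
        = lam.re * (⟪G (u : Y), (u : Y)⟫_ℂ).re - (⟪B u, (u : Y)⟫_ℂ).re := by
      rw [e1, Complex.sub_re]
      congr 1
      rw [hreal]
      simp [Complex.mul_re, Complex.conj_re, Complex.conj_im]
    have e3 : (⟪f, (u : Y)⟫_ℂ).re ≤ ‖f‖ * ‖(u : Y)‖ := by
      calc (⟪f, (u : Y)⟫_ℂ).re ≤ ‖⟪f, (u : Y)⟫_ℂ‖ := by
            exact Complex.re_le_norm _
      _ ≤ _ := norm_inner_le_norm _ _
    have e4 := hBdiss u
    linarith
  have h2 : ‖G (u : Y)‖ ^ 2 ≤ ‖G‖ * (⟪G (u : Y), (u : Y)⟫_ℂ).re := Gsq G hGsym hGnn _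
  have h3 : ‖(u : Y)‖ ≤ ‖R0‖ * ‖f‖ + ‖R0‖ * ‖lam - lam0‖ * ‖G (u : Y)‖ := by
    have e1 : lam0 • G (u : Y) - B u = f + (lam0 - lam) • G (u : Y) := by
      rw [hf, sub_smul]; abel
    have e2 : (u : Y) = R0 (f + (lam0 - lam) • G (u : Y)) := by
      rw [← e1]; exact (hR0 u).symm
    calc ‖(u : Y)‖ = ‖R0 (f + (lam0 - lam) • G (u : Y))‖ := by rw [← e2]
    _ ≤ ‖R0‖ * ‖f + (lam0 - lam) • G (u : Y)‖ := R0.le_opNorm _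
    _ ≤ ‖R0‖ * (‖f‖ + ‖(lam0 - lam) • G (u : Y)‖) :=
        mul_le_mul_of_nonneg_left (norm_add_le _ _) (norm_nonneg _)
    _ = ‖R0‖ * ‖f‖ + ‖R0‖ * (‖lam0 - lam‖ * ‖G (u : Y)‖) := by rw [norm_smul]; ring
    _ = ‖R0‖ * ‖f‖ + ‖R0‖ * ‖lam - lam0‖ * ‖G (u : Y)‖ := by rw [norm_sub_rev lam0 lam]; ring
  -- abbreviations
  set t := ‖(u : Y)‖ with ht_def
  set F := ‖f‖ with hF_def
  set r := ‖R0‖ with hr_def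
  set d := ‖lam - lam0‖ with hd_def
  set g := ‖G‖ with hg_def
  set h := ‖G (u : Y)‖ with hh_def
  set a := lam.re with ha_def
  have ha : 0 < a := hlam
  have hFnn : 0 ≤ F := norm_nonneg _
  have htnn : 0 ≤ t := norm_nonneg _
  have hrnn : 0 ≤ r := norm_nonneg _
  have hdnn : 0 ≤ d := norm_nonneg _
  have hgnn : 0 ≤ g := norm_nonneg _
  have hhnn : 0 ≤ h := norm_nonneg _
  rw [div_mul_eq_mul_div, le_div_iff₀ ha]
  -- goal : t * a ≤ (2 * r * a + 2 * r ^ 2 * d ^ 2 * g) * F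
  have k1 : a * h ^ 2 ≤ g * (F * t) := by
    nlinarith [mul_le_mul_of_nonneg_left h2 ha.le, mul_le_mul_of_nonneg_left h1 hgnn]
  rcases le_total (d * h) F with hx | hx
  · have k2 : t ≤ 2 * r * F := by nlinarith [mul_le_mul_of_nonneg_left hx hrnn]
    nlinarith [mul_le_mul_of_nonneg_right k2 ha.le,
      mul_nonneg (mul_nonneg (mul_nonneg (by norm_num : (0:ℝ) ≤ 2) (mul_nonneg (sq_nonneg r) (sq_nonneg d))) hgnn) hFnn]
  · have hax : a * (d * h) ^ 2 ≤ 2 * r * d ^ 2 * g * F * (d * h) := by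
      nlinarith [mul_le_mul_of_nonneg_left k1 (mul_nonneg hdnn hdnn),
        mul_le_mul_of_nonneg_left h3 (mul_nonneg (mul_nonneg (mul_nonneg hdnn hdnn) hgnn) hFnn),
        mul_le_mul_of_nonneg_left hx (mul_nonneg (mul_nonneg (mul_nonneg (mul_nonneg hdnn hdnn) hgnn) hFnn) hrnn)]
    rcases eq_or_lt_of_le (mul_nonneg hdnn hhnn) with hx0 | hx0
    · have hF0 : F = 0 := le_antisymm (by rw [← hx0] at hx; exact hx) hFnn
      have ht0 : t = 0 := by
        have : t ≤ r * F + r * (d * h) := by rw [mul_assoc] at h3; exact h3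
        rw [← hx0, hF0] at this
        simpa using le_antisymm (by simpa using this) htnn
      rw [ht0, hF0]
      simp
    · have hax' : a * (d * h) ≤ 2 * r * d ^ 2 * g * F := by
        refine le_of_mul_le_mul_right ?_ hx0
        calc a * (d * h) * (d * h) = a * (d * h) ^ 2 := by ring
        _ ≤ 2 * r * d ^ 2 * g * F * (d * h) := hax
      have k3 : t * a ≤ (r * F + r * (d * h)) * a := by
        apply mul_le_mul_of_nonneg_right _ ha.le
        rw [mul_assoc] at h3; exact h3
      nlinarith [mul_le_mul_of_nonneg_left hax' hrnn, mul_nonneg (mul_nonneg hrnn hFnn) ha.le]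

/-- From an injectivity bound plus density of the range, construct the bounded
inverse. -/
lemma regY_of_bound_dense (hBclosed : IsClosed (B.graph : Set (Y × Y))) (lam : ℂ)
    (C : ℝ) (hC : 0 ≤ C)
    (hbound : ∀ u : B.domain, ‖(u : Y)‖ ≤ C * ‖lam • G u - B u‖)
    (hdense : ∀ v : Y, (∀ u : B.domain, ⟪lam • G u - B u, v⟫_ℂ = 0) → v = 0) :
    RegY G B lam := by
  classical
  let Pl : B.domain →ₗ[ℂ] Y :=
    { toFun := fun u => lam • G (u : Y) - B u
      map_add' := by
        intro u v
        simp only [Submodule.coe_add, map_add, LinearPMap.map_add, smul_add]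
        abel
      map_smul' := by
        intro c u
        simp only [SetLike.val_smul, map_smul, LinearPMap.map_smul, RingHom.id_apply]
        rw [smul_sub, smul_comm] }
  have hboundP : ∀ u : B.domain, ‖(u : Y)‖ ≤ C * ‖Pl u‖ := fun u => hbound u
  have hinj : ∀ u v : B.domain, Pl u = Pl v → u = v := by
    intro u v huv
    have h0 : Pl (u - v) = 0 := by rw [map_sub, huv, sub_self]
    have h := hboundP (u - v)
    rw [h0] at h
    simp only [norm_zero, mul_zero] at h
    have h2 : ((u - v : B.domain) : Y) = 0 := by
      have := norm_nonneg ((u - v : B.domain) : Y)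
      have h3 : ‖((u - v : B.domain) : Y)‖ = 0 := le_antisymm h this
      exact norm_eq_zero.mp h3
    have h4 : (u - v : B.domain) = 0 := by
      exact Subtype.ext (by simpa using h2)
    exact sub_eq_zero.mp h4
  set M : Submodule ℂ Y := LinearMap.range Pl with hM
  have hMc : IsClosed (M : Set Y) := by
    apply IsSeqClosed.isClosed
    intro x y hx hy
    have hx' : ∀ n, ∃ u : B.domain, Pl u = x n := fun n => LinearMap.mem_range.mp (hx n)
    choose u hu using hx'
    have hcx : CauchySeq x := hy.cauchySeq
    have hcu : CauchySeq (fun n => (u n : Y)) := by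
      rw [Metric.cauchySeq_iff] at hcx ⊢
      intro ε hε
      obtain ⟨N, hN⟩ := hcx (ε / (C + 1)) (by positivity)
      refine ⟨N, fun m hm n hn => ?_⟩
      have h2 : Pl (u m - u n) = x m - x n := by rw [map_sub, hu, hu]
      have h3 : ‖(u m : Y) - (u n : Y)‖ ≤ C * ‖x m - x n‖ := by
        have h1 := hboundP (u m - u n)
        rw [h2] at h1
        simpa using h1
      have h4 : C * ‖x m - x n‖ ≤ C * (ε / (C + 1)) := by
        apply mul_le_mul_of_nonneg_left _ hC
        have := hN m hm n hn
        rw [dist_eq_norm] at this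
        exact this.le
      have h5 : C * (ε / (C + 1)) < ε := by
        have hpos : (0:ℝ) < C + 1 := by positivity
        have h6 : C * ε / (C + 1) < ε := (div_lt_iff₀ hpos).mpr (by nlinarith)
        calc C * (ε / (C + 1)) = C * ε / (C + 1) := by ring
        _ < ε := h6
      rw [dist_eq_norm]
      calc ‖(u m : Y) - (u n : Y)‖ ≤ C * ‖x m - x n‖ := h3
      _ ≤ C * (ε / (C + 1)) := h4
      _ < ε := h5
    obtain ⟨z, hz⟩ := cauchySeq_tendsto_of_complete hcu
    have hB : ∀ n, B (u n) = lam • G ((u n : Y)) - x n := by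
      intro n
      have h1 : lam • G ((u n : Y)) - B (u n) = x n := hu n
      rw [← h1]
      abel
    have htend : Tendsto (fun n => ((u n : Y), lam • G ((u n : Y)) - x n)) atTop
        (𝓝 (z, lam • G z - y)) := by
      apply Tendsto.prodMk_nhds hz
      exact (((G.continuous.tendsto z).comp hz).const_smul lam).sub hy
    have hmem : (z, lam • G z - y) ∈ B.graph := by
      apply hBclosed.mem_of_tendsto htend
      filter_upwards with n
      rw [← hB n]
      exact B.mem_graph (u n)
    obtain ⟨w, hw1, hw2⟩ := B.mem_graph_iff.mp hmem
    refine LinearMap.mem_range.mpr ⟨w, ?_⟩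
    show lam • G (w : Y) - B w = y
    rw [show (w : Y) = z from hw1, show B w = lam • G z - y from hw2]
    exact sub_sub_cancel _ _
  have hMtop : ∀ y : Y, ∃ u : B.domain, Pl u = y := by
    haveI : CompleteSpace M := hMc.completeSpace_coe
    have ho : Mᗮ = ⊥ := by
      rw [Submodule.eq_bot_iff]
      intro v hv
      apply hdense
      intro u
      exact (Submodule.mem_orthogonal M v).mp hv _ (LinearMap.mem_range_self Pl u)
    have htop : M = ⊤ := Submodule.orthogonal_eq_bot_iff.mp ho
    intro y
    have hy : y ∈ M := by rw [htop]; exact Submodule.mem_top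
    exact LinearMap.mem_range.mp hy
  choose φ hφ using hMtop
  have hψadd : ∀ y z : Y, φ (y + z) = φ y + φ z := fun y z =>
    hinj _ _ (by rw [map_add, hφ, hφ, hφ])
  have hψsmul : ∀ (c : ℂ) (y : Y), φ (c • y) = c • φ y := fun c y =>
    hinj _ _ (by rw [map_smul, hφ, hφ])
  let Slin : Y →ₗ[ℂ] Y :=
    { toFun := fun y => (φ y : Y)
      map_add' := fun y z => by
        show ((φ (y + z) : B.domain) : Y) = ((φ y : B.domain) : Y) + ((φ z : B.domain) : Y)
        rw [hψadd]; simp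
      map_smul' := fun c y => by
        show ((φ (c • y) : B.domain) : Y) = c • ((φ y : B.domain) : Y)
        rw [hψsmul]; simp }
  have hSb : ∀ y : Y, ‖Slin y‖ ≤ C * ‖y‖ := by
    intro y
    calc ‖Slin y‖ = ‖((φ y : B.domain) : Y)‖ := rfl
    _ ≤ C * ‖Pl (φ y)‖ := hboundP _
    _ = C * ‖y‖ := by rw [hφ]
  refine ⟨Slin.mkContinuous C hSb, ?_, ?_⟩
  · intro u
    show ((φ (lam • G (u : Y) - B u) : B.domain) : Y) = (u : Y)
    have h1 : φ (Pl u) = u := hinj _ _ (hφ _)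
    exact congrArg _ h1
  · intro y
    have h1 : ((φ y : B.domain) : Y) ∈ B.domain := (φ y).2
    refine ⟨h1, ?_⟩
    show lam • G ((φ y : B.domain) : Y) - B ⟨((φ y : B.domain) : Y), h1⟩ = y
    have he : (⟨((φ y : B.domain) : Y), h1⟩ : B.domain) = φ y := Subtype.coe_eta _ _
    rw [he]
    exact hφ y

/-- A regular point in the open right half plane forces maximal dissipativity. -/
lemma maxdiss_of_regY (hGsym : ∀ y z : Y, ⟪G y, z⟫_ℂ = ⟪y, G z⟫_ℂ)
    (hGnn : ∀ y : Y, 0 ≤ (⟪G y, y⟫_ℂ).re) (hBdiss : Dissipative B)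
    (lam1 : ℂ) (hl1 : 0 < lam1.re) (hreg : RegY G B lam1) :
    MaxDissipative B := by
  obtain ⟨S, hSl, hSr⟩ := hreg
  refine ⟨hBdiss, ?_⟩
  intro B' hB'd hsub hagree
  refine le_antisymm ?_ (fun y hy => hsub hy)
  intro w hw
  set yw := lam1 • G w - B' ⟨w, hw⟩ with hyw
  obtain ⟨h1, h2⟩ := hSr yw
  set u : Y := S yw with hu_def
  set v := w - u with hv_def
  have huB' : u ∈ B'.domain := hsub h1
  have hvB' : v ∈ B'.domain := B'.domain.sub_mem hw huB'
  have hBu : B ⟨u, h1⟩ = lam1 • G u - yw := by rw [← h2]; abel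
  have hB'w : B' ⟨w, hw⟩ = lam1 • G w - yw := by rw [hyw]; abel
  have hB'v : B' ⟨v, hvB'⟩ = lam1 • G v := by
    have e1 : (⟨v, hvB'⟩ : B'.domain) = ⟨w, hw⟩ - ⟨u, huB'⟩ := Subtype.ext (by simp [hv_def])
    rw [e1, LinearPMap.map_sub, ← hagree u h1 huB', hBu, hB'w, hv_def, map_sub, smul_sub]
    abel
  have hγ : (⟪G v, v⟫_ℂ).re = 0 := by
    have hd := hB'd ⟨v, hvB'⟩
    rw [hB'v] at hd
    have hreal := Greal G hGsym v
    have he : (⟪lam1 • G v, v⟫_ℂ).re = lam1.re * (⟪G v, v⟫_ℂ).re := by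
      rw [inner_smul_left, hreal]
      simp [Complex.mul_re, Complex.conj_re, Complex.conj_im]
    rw [he] at hd
    have hnn := hGnn v
    nlinarith
  have hGv : G v = 0 := by
    have hq := Gsq G hGsym hGnn v
    rw [hγ, mul_zero] at hq
    have h0 : ‖G v‖ = 0 := by nlinarith [norm_nonneg (G v)]
    exact norm_eq_zero.mp h0
  have hB'v0 : B' ⟨v, hvB'⟩ = 0 := by rw [hB'v, hGv, smul_zero]
  have hBuv : ∀ u' : B.domain, ⟪B u', v⟫_ℂ = 0 := by
    intro u'
    set K := ⟪B u', v⟫_ℂ with hK_def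
    by_contra hKne
    have key : ∀ t : ℝ, 0 < t → (⟪B u', (u' : Y)⟫_ℂ).re + t * Complex.normSq K ≤ 0 := by
      intro t ht
      set s : ℂ := (t : ℂ) * (starRingEnd ℂ) K with hs_def
      have hmem : (u' : Y) + s • v ∈ B'.domain :=
        B'.domain.add_mem (hsub u'.2) (B'.domain.smul_mem _ hvB')
      have e1 : (⟨(u' : Y) + s • v, hmem⟩ : B'.domain)
          = ⟨(u' : Y), hsub u'.2⟩ + s • ⟨v, hvB'⟩ := Subtype.ext (by simp)
      have happ : B' ⟨(u' : Y) + s • v, hmem⟩ = B u' := by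
        rw [e1, LinearPMap.map_add, LinearPMap.map_smul, hB'v0, smul_zero, add_zero,
          ← hagree _ u'.2 _]
      have hdval := hB'd ⟨_, hmem⟩
      rw [happ] at hdval
      have hexp : ⟪B u', (u' : Y) + s • v⟫_ℂ = ⟪B u', (u' : Y)⟫_ℂ + (t : ℂ) * (Complex.normSq K : ℂ) := by
        rw [inner_add_right, inner_smul_right, ← hK_def, hs_def]
        congr 1
        rw [mul_assoc]
        congr 1
        rw [← Complex.mul_conj]
        ring
      rw [hexp] at hdval
      have : ((t : ℂ) * (Complex.normSq K : ℂ)).re = t * Complex.normSq K := by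
        simp [Complex.mul_re]
      rw [Complex.add_re, this] at hdval
      exact hdval
    have hns : 0 < Complex.normSq K := Complex.normSq_pos.mpr hKne
    set t : ℝ := (1 + |(⟪B u', (u' : Y)⟫_ℂ).re|) / Complex.normSq K with ht_def
    have ht : 0 < t := by positivity
    have hfin := key t ht
    rw [ht_def, div_mul_cancel₀ _ (ne_of_gt hns)] at hfin
    have := abs_nonneg ((⟪B u', (u' : Y)⟫_ℂ).re)
    have := neg_abs_le ((⟪B u', (u' : Y)⟫_ℂ).re)
    linarith
  have hv0 : v = 0 := by
    have hall : ∀ y : Y, ⟪y, v⟫_ℂ = 0 := by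
      intro y
      obtain ⟨hy1, hy2⟩ := hSr y
      rw [← hy2, inner_sub_left, inner_smul_left, hBuv ⟨S y, hy1⟩, hGsym (S y) v, hGv]
      simp
    have := hall v
    rwa [inner_self_eq_zero] at this
  have hwu : w = u := by
    have h : w - u = 0 := hv0
    exact sub_eq_zero.mp h
  rw [hwu]
  exact h1

/-- Main lemma: a regular point anywhere plus maximal dissipativity gives regularity
in the whole open right half plane. -/
lemma regY_all (hGsym : ∀ y z : Y, ⟪G y, z⟫_ℂ = ⟪y, G z⟫_ℂ)
    (hGnn : ∀ y : Y, 0 ≤ (⟪G y, y⟫_ℂ).re) (hBdiss : Dissipative B)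
    (hBclosed : IsClosed (B.graph : Set (Y × Y))) (hmax : MaxDissipative B)
    (lam0 : ℂ) (hreg0 : RegY G B lam0) (lam : ℂ) (hlam : 0 < lam.re) :
    RegY G B lam := by
  obtain ⟨R0, hR0l, hR0r⟩ := hreg0
  set C : ℝ := (2 * ‖R0‖ * lam.re + 2 * ‖R0‖ ^ 2 * ‖lam - lam0‖ ^ 2 * ‖G‖) / lam.re with hC_def
  have hC : 0 ≤ C := by positivity
  have hbound : ∀ u : B.domain, ‖(u : Y)‖ ≤ C * ‖lam • G u - B u‖ :=
    inj_bound G B hGsym hGnn hBdiss lam0 lam hlam R0 hR0l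
  apply regY_of_bound_dense G B hBclosed lam C hC hbound
  intro v hv
  have hA : ∀ u : B.domain, ⟪B u, v⟫_ℂ = (starRingEnd ℂ) lam * ⟪(u : Y), G v⟫_ℂ := by
    intro u
    have h := hv u
    rw [inner_sub_left, inner_smul_left, hGsym] at h
    exact (sub_eq_zero.mp h).symm
  by_cases hvd : v ∈ B.domain
  · have hg0 : (⟪G v, v⟫_ℂ).re = 0 := by
      have h := hv ⟨v, hvd⟩
      have h0 : (⟪lam • G v - B ⟨v, hvd⟩, v⟫_ℂ).re = 0 := by rw [h]; simp
      have hre : (⟪lam • G v - B ⟨v, hvd⟩, v⟫_ℂ).re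
          = lam.re * (⟪G v, v⟫_ℂ).re - (⟪B ⟨v, hvd⟩, v⟫_ℂ).re := by
        rw [inner_sub_left, inner_smul_left, Complex.sub_re]
        congr 1
        rw [Greal G hGsym v]
        simp [Complex.mul_re, Complex.conj_re, Complex.conj_im]
      have hdq := hBdiss ⟨v, hvd⟩
      have hnn := hGnn v
      nlinarith
    have hGv : G v = 0 := by
      have hq := Gsq G hGsym hGnn v
      rw [hg0, mul_zero] at hq
      have h0 : ‖G v‖ = 0 := by nlinarith [norm_nonneg (G v)]
      exact norm_eq_zero.mp h0
    have hBv0 : ∀ u : B.domain, ⟪B u, v⟫_ℂ = 0 := fun u => by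
      rw [hA u, hGv]; simp
    have hall : ∀ y : Y, ⟪y, v⟫_ℂ = 0 := by
      intro y
      obtain ⟨hy1, hy2⟩ := hR0r y
      rw [← hy2, inner_sub_left, inner_smul_left, hBv0 ⟨R0 y, hy1⟩, hGsym (R0 y) v, hGv]
      simp
    have := hall v
    rwa [inner_self_eq_zero] at this
  · exfalso
    set w0 : Y := (-((starRingEnd ℂ) lam)) • G v with hw0_def
    set B2 := B.supSpanSingleton v w0 hvd with hB2_def
    have hdom : B2.domain = B.domain ⊔ ℂ ∙ v := rfl
    have hvB2 : v ∈ B2.domain := by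
      rw [hdom]
      exact Submodule.mem_sup_right (Submodule.mem_span_singleton_self v)
    have hle : B.domain ≤ B2.domain := by rw [hdom]; exact le_sup_left
    have hsubset : (B.domain : Set Y) ⊆ (B2.domain : Set Y) := fun y hy => hle hy
    have hagree : ∀ (y : Y) (hy : y ∈ B.domain) (hy2 : y ∈ B2.domain),
        B ⟨y, hy⟩ = B2 ⟨y, hy2⟩ := by
      intro y hy hy2
      have e1 : (⟨y, hy2⟩ : B2.domain)
          = ⟨y + (0 : ℂ) • v, Submodule.mem_sup.2
              ⟨y, hy, _, Submodule.mem_span_singleton.2 ⟨0, rfl⟩, rfl⟩⟩ :=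
        Subtype.ext (by simp)
      rw [e1]
      exact ((B.supSpanSingleton_apply_mk v w0 hvd y hy 0).trans (by simp)).symm
    have hdiss2 : Dissipative B2 := by
      intro wz
      have hwz2 : (wz : Y) ∈ B.domain ⊔ ℂ ∙ v := hdom ▸ wz.2
      obtain ⟨y, hy, z, hz, hyz⟩ := Submodule.mem_sup.mp hwz2
      obtain ⟨c, rfl⟩ := Submodule.mem_span_singleton.mp hz
      have e1 : wz = (⟨y + c • v, Submodule.mem_sup.2
          ⟨y, hy, _, Submodule.mem_span_singleton.2 ⟨c, rfl⟩, rfl⟩⟩ : B2.domain) :=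
        Subtype.ext hyz.symm
      have happ : B2 wz = B ⟨y, hy⟩ + c • w0 := by
        rw [e1]
        exact B.supSpanSingleton_apply_mk v w0 hvd y hy c
      have hcoe : (wz : Y) = y + c • v := hyz.symm
      set g : ℝ := (⟪G v, v⟫_ℂ).re with hg_def
      have hgc : ⟪G v, v⟫_ℂ = (g : ℂ) := Greal G hGsym v
      have hBy : ⟪B ⟨y, hy⟩, v⟫_ℂ = (starRingEnd ℂ) lam * ⟪y, G v⟫_ℂ := hA ⟨y, hy⟩
      set zy : ℂ := ⟪y, G v⟫_ℂ with hzy_def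
      have hexp : ⟪B2 wz, (wz : Y)⟫_ℂ
          = ⟪B ⟨y, hy⟩, y⟫_ℂ
            + ((c * (starRingEnd ℂ) lam) * zy
              - (starRingEnd ℂ) ((c * (starRingEnd ℂ) lam) * zy))
            - ((starRingEnd ℂ) c * c) * lam * (g : ℂ) := by
        rw [happ, hcoe, hw0_def]
        simp only [inner_add_left, inner_add_right, inner_smul_left, inner_smul_right,
          neg_smul, inner_neg_left, inner_neg_right, map_mul, map_neg, Complex.conj_conj]
        rw [hBy, hgc,
          show ⟪G v, y⟫_ℂ = (starRingEnd ℂ) ⟪y, G v⟫_ℂ from (inner_conj_symm _ _).symm]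
        simp only [map_mul, Complex.conj_conj, ← hzy_def]
        ring
      have hre0 : (⟪B2 wz, (wz : Y)⟫_ℂ).re
          = (⟪B ⟨y, hy⟩, y⟫_ℂ).re - Complex.normSq c * lam.re * g := by
        rw [hexp]
        have hcc : (starRingEnd ℂ) c * c = (Complex.normSq c : ℂ) := by
          rw [← Complex.mul_conj]; ring
        rw [hcc]
        simp only [Complex.add_re, Complex.sub_re, Complex.conj_re, Complex.mul_re,
          Complex.ofReal_re, Complex.ofReal_im]
        ring
      rw [hre0]
      have h1 : (⟪B ⟨y, hy⟩, y⟫_ℂ).re ≤ 0 := hBdiss ⟨y, hy⟩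
      have h2 : 0 ≤ Complex.normSq c := Complex.normSq_nonneg c
      have h3 : 0 ≤ g := hGnn v
      nlinarith [mul_nonneg (mul_nonneg h2 hlam.le) h3]
    have heq := hmax.2 B2 hdiss2 hsubset hagree
    rw [heq] at hvB2
    exact hvd hvB2

end Ylemmas

/-- Transfer between `RegAt` for the pencil `λ E - B Q` and `RegY` for `λ (E Q⁻¹) - B`. -/
lemma regAt_iff_regY (E Q : X →L[ℂ] Y) (B : Y →ₗ.[ℂ] Y) (Qi : Y →L[ℂ] X)
    (hQi1 : ∀ x, Qi (Q x) = x) (hQi2 : ∀ y, Q (Qi y) = y) (lam : ℂ) :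
    RegAt E Q B lam ↔ RegY (E.comp Qi) B lam := by
  have hBQ : ∀ (v : X) (h : Q v ∈ B.domain), BQap Q B v = B ⟨Q v, h⟩ := by
    intro v h
    simp only [BQap]
    rw [dif_pos h]
  constructor
  · rintro ⟨T, hTl, hTr⟩
    refine ⟨Q.comp T, ?_, ?_⟩
    · intro u
      have hu : Q (Qi (u : Y)) ∈ B.domain := by rw [hQi2]; exact u.2
      have harg : (⟨Q (Qi (u : Y)), hu⟩ : B.domain) = u :=
        Subtype.ext (show Q (Qi (u : Y)) = (u : Y) from hQi2 _)
      have he : lam • (E.comp Qi) (u : Y) - B u = lam • E (Qi (u : Y)) - BQap Q B (Qi (u : Y)) := by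
        rw [hBQ _ hu, harg]
        rfl
      rw [ContinuousLinearMap.comp_apply, he, hTl _ hu, hQi2]
    · intro y
      obtain ⟨h1, h2⟩ := hTr y
      refine ⟨h1, ?_⟩
      conv_rhs => rw [← h2]
      rw [hBQ _ h1]
      simp only [ContinuousLinearMap.comp_apply, hQi1]
  · rintro ⟨S, hSl, hSr⟩
    refine ⟨Qi.comp S, ?_, ?_⟩
    · intro v hv
      have he : lam • E v - BQap Q B v = lam • (E.comp Qi) (Q v) - B ⟨Q v, hv⟩ := by
        rw [hBQ _ hv]
        simp only [ContinuousLinearMap.comp_apply, hQi1]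
      rw [ContinuousLinearMap.comp_apply, he, hSl ⟨Q v, hv⟩, hQi1]
    · intro y
      obtain ⟨h1, h2⟩ := hSr y
      have hq : Q (Qi (S y)) = S y := hQi2 _
      have hmem : Q ((Qi.comp S) y) ∈ B.domain := by
        rw [ContinuousLinearMap.comp_apply, hq]; exact h1
      refine ⟨hmem, ?_⟩
      have harg : (⟨Q ((Qi.comp S) y), hmem⟩ : B.domain) = ⟨S y, h1⟩ :=
        Subtype.ext (show Q ((Qi.comp S) y) = S y from hq)
      conv_rhs => rw [← h2]
      rw [hBQ _ hmem, harg]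
      rfl

/-- For the dissipative Hamiltonian pencil `P(λ) = λE - BQ` the following are
equivalent: (a) some `λ0 ∈ ℂ` is a regular point and `B` is maximally dissipative;
(b) every `λ0` with `Re λ0 > 0` is a regular point; (c) some `λ0` with `Re λ0 > 0` is a
regular point. -/
theorem stmt_17 (E Q : X →L[ℂ] Y) (B : Y →ₗ.[ℂ] Y)
    (hQinv : ∃ Qi : Y →L[ℂ] X, (∀ x, Qi (Q x) = x) ∧ (∀ y, Q (Qi y) = y))
    (hQE : IsSelfAdjoint ((ContinuousLinearMap.adjoint Q).comp E))
    (hQEnn : ∀ x : X, 0 ≤ (⟪((ContinuousLinearMap.adjoint Q).comp E) x, x⟫_ℂ).re)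
    (hBdense : Dense (B.domain : Set Y)) (hBclosed : IsClosed (B.graph : Set (Y × Y)))
    (hBdiss : Dissipative B) :
    (((∃ lam0 : ℂ, RegAt E Q B lam0) ∧ MaxDissipative B) ↔
      (∀ lam0 : ℂ, 0 < lam0.re → RegAt E Q B lam0)) ∧
    ((∀ lam0 : ℂ, 0 < lam0.re → RegAt E Q B lam0) ↔
      (∃ lam0 : ℂ, 0 < lam0.re ∧ RegAt E Q B lam0)) := by
  obtain ⟨Qi, hQi1, hQi2⟩ := hQinv
  set G : Y →L[ℂ] Y := E.comp Qi with hG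
  have hsymQE : ∀ a b : X, ⟪((ContinuousLinearMap.adjoint Q).comp E) a, b⟫_ℂ
      = ⟪a, ((ContinuousLinearMap.adjoint Q).comp E) b⟫_ℂ := fun a b =>
    hQE.isSymmetric a b
  have key : ∀ y z : Y, ⟪G y, z⟫_ℂ
      = ⟪((ContinuousLinearMap.adjoint Q).comp E) (Qi y), Qi z⟫_ℂ := by
    intro y z
    calc ⟪G y, z⟫_ℂ = ⟪E (Qi y), Q (Qi z)⟫_ℂ := by rw [hQi2]; rfl
    _ = ⟪(ContinuousLinearMap.adjoint Q) (E (Qi y)), Qi z⟫_ℂ :=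
        (ContinuousLinearMap.adjoint_inner_left Q _ _).symm
    _ = _ := rfl
  have hGsym : ∀ y z : Y, ⟪G y, z⟫_ℂ = ⟪y, G z⟫_ℂ := by
    intro y z
    rw [key, hsymQE]
    calc ⟪Qi y, ((ContinuousLinearMap.adjoint Q).comp E) (Qi z)⟫_ℂ
        = ⟪Qi y, (ContinuousLinearMap.adjoint Q) (E (Qi z))⟫_ℂ := rfl
    _ = ⟪Q (Qi y), E (Qi z)⟫_ℂ := ContinuousLinearMap.adjoint_inner_right Q _ _
    _ = ⟪y, G z⟫_ℂ := by rw [hQi2]; rfl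
  have hGnn : ∀ y : Y, 0 ≤ (⟪G y, y⟫_ℂ).re := by
    intro y
    rw [key]; exact hQEnn (Qi y)
  have htrans : ∀ lam : ℂ, RegAt E Q B lam ↔ RegY G B lam := fun lam =>
    regAt_iff_regY E Q B Qi hQi1 hQi2 lam
  constructor
  · constructor
    · rintro ⟨⟨lam0, hreg0⟩, hmax⟩ lam hlam
      exact (htrans lam).2 (regY_all G B hGsym hGnn hBdiss hBclosed hmax lam0
        ((htrans lam0).1 hreg0) lam hlam)
    · intro hb
      have h1 : RegY G B 1 := (htrans 1).1 (hb 1 (by norm_num))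
      exact ⟨⟨1, hb 1 (by norm_num)⟩,
        maxdiss_of_regY G B hGsym hGnn hBdiss 1 (by norm_num) h1⟩
  · constructor
    · intro hb
      exact ⟨1, by norm_num, hb 1 (by norm_num)⟩
    · rintro ⟨lam0, hlam0, hreg0⟩ lam hlam
      have hmax := maxdiss_of_regY G B hGsym hGnn hBdiss lam0 hlam0
        ((htrans lam0).1 hreg0)
      exact (htrans lam).2 (regY_all G B hGsym hGnn hBdiss hBclosed hmax lam0
        ((htrans lam0).1 hreg0) lam hlam)
end
end

section
/- Consider the dissipative Hamiltonian setting with pencil λE − BQ. The following are equivalent: (c') {x ∈ D(BQ) : Ex = 0 and BQx = 0} = {0}; (e') for every x0 ∈ X, every T > 0, and any two mild solutions x1, x2 on [0, T] of the Cauchy problem E ẋ(t) = BQ x(t), x(0) = x0, one has x1(t) = x2(t) for all t ∈ [0, T]. -/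
open Filter Topology
open scoped InnerProductSpace

noncomputable section

variable {X : Type*} [NormedAddCommGroup X] [InnerProductSpace ℂ X] [CompleteSpace X] in
lemma pos_op_apply_eq_zero {A : X →L[ℂ] X} (hA : IsSelfAdjoint A)
    (hpos : ∀ x : X, 0 ≤ (⟪A x, x⟫_ℂ).re) {u : X} (hu : (⟪A u, u⟫_ℂ).re = 0) :
    A u = 0 := by
  have hadj : ContinuousLinearMap.adjoint A = A := by
    rwa [IsSelfAdjoint, ContinuousLinearMap.star_eq_adjoint] at hA
  have hswap : ∀ y z : X, ⟪A y, z⟫_ℂ = (starRingEnd ℂ) ⟪A z, y⟫_ℂ := by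
    intro y z
    rw [← hadj, ContinuousLinearMap.adjoint_inner_left, inner_conj_symm, hadj]
  have key : ∀ y : X, (⟪A u, y⟫_ℂ).re = 0 := by
    intro y
    set a : ℝ := (⟪A y, y⟫_ℂ).re with ha
    set b : ℝ := (⟪A u, y⟫_ℂ).re with hb
    have ha0 : 0 ≤ a := hpos y
    have h2 : ∀ t : ℝ, 0 ≤ 2 * t * b + t ^ 2 * a := by
      intro t
      have h := hpos (u + (t : ℂ) • y)
      have e1 : ⟪A (u + (t : ℂ) • y), u + (t : ℂ) • y⟫_ℂ
          = ⟪A u, u⟫_ℂ + (t : ℂ) * ⟪A u, y⟫_ℂ + (t : ℂ) * ⟪A y, u⟫_ℂ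
            + ((t * t : ℝ) : ℂ) * ⟪A y, y⟫_ℂ := by
        rw [map_add, map_smul, inner_add_left, inner_add_right, inner_add_right,
          inner_smul_left, inner_smul_right, inner_smul_left, inner_smul_right,
          Complex.conj_ofReal]
        push_cast; ring
      have hyu : (⟪A y, u⟫_ℂ).re = b := by rw [hswap y u, Complex.conj_re]
      rw [e1] at h
      simp only [Complex.add_re, Complex.re_ofReal_mul] at h
      rw [hu, hyu, ← hb] at h
      calc (0:ℝ) ≤ 0 + t * b + t * b + t * t * a := h
        _ = 2 * t * b + t ^ 2 * a := by ring
    by_contra hbne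
    have hb2 : 0 < b ^ 2 := by positivity
    have ha1 : (0:ℝ) < a + 1 := by linarith
    have ht := h2 (-(b * (a + 1)⁻¹))
    have key3 : 2 * -(b * (a + 1)⁻¹) * b + (-(b * (a + 1)⁻¹)) ^ 2 * a
        = b ^ 2 * (a + 1)⁻¹ * (a + 1)⁻¹ * (a - 2 * (a + 1)) := by
      field_simp; ring
    have hneg : b ^ 2 * (a + 1)⁻¹ * (a + 1)⁻¹ * (a - 2 * (a + 1)) < 0 :=
      mul_neg_of_pos_of_neg (by positivity) (by linarith)
    rw [key3] at ht; linarith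
  have key2 : ⟪A u, A u⟫_ℂ = 0 := by
    have hre := key (A u)
    have him := key (Complex.I • A u)
    rw [inner_smul_right] at him
    simp only [Complex.mul_re, Complex.I_re, Complex.I_im] at him
    have : (⟪A u, A u⟫_ℂ).im = 0 := by linarith
    exact Complex.ext hre this
  exact inner_self_eq_zero.mp key2


variable {X Y : Type*}
  [NormedAddCommGroup X] [InnerProductSpace ℂ X] [CompleteSpace X]
  [NormedAddCommGroup Y] [InnerProductSpace ℂ Y] [CompleteSpace Y]

/-- `x` is a mild solution on `[0,T]` of the Cauchy problem `E ẋ = BQ x`, `x(0) = x0`: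
`x` is continuous, `x(0) = x0`, and for every `t ∈ [0,T]` the integral `∫_0^t x(s) ds`
lies in `D(BQ)` and `E x(t) - BQ ∫_0^t x(s) ds = E x0`. -/
def IsMildSolution (E Q : X →L[ℂ] Y) (B : Y →ₗ.[ℂ] Y) (x0 : X) (T : ℝ)
    (x : ℝ → X) : Prop :=
  ContinuousOn x (Set.Icc (0 : ℝ) T) ∧ x 0 = x0 ∧
  ∀ t ∈ Set.Icc (0 : ℝ) T,
    Q (∫ s in (0 : ℝ)..t, x s) ∈ B.domain ∧
    E (x t) - BQap Q B (∫ s in (0 : ℝ)..t, x s) = E x0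

/-- For the dissipative Hamiltonian pencil `λE - BQ` the following are equivalent:
(c') `ker E ∩ ker BQ = {0}` (within `D(BQ)`); (e') mild solutions of the Cauchy problem
`E ẋ = BQ x`, `x(0) = x0`, are unique. -/
theorem stmt_19 (E Q : X →L[ℂ] Y) (B : Y →ₗ.[ℂ] Y)
    (hQinv : ∃ Qi : Y →L[ℂ] X, (∀ x, Qi (Q x) = x) ∧ (∀ y, Q (Qi y) = y))
    (hQE : IsSelfAdjoint ((ContinuousLinearMap.adjoint Q).comp E))
    (hQEnn : ∀ x : X, 0 ≤ (⟪((ContinuousLinearMap.adjoint Q).comp E) x, x⟫_ℂ).re)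
    (hBdense : Dense (B.domain : Set Y)) (hBclosed : IsClosed (B.graph : Set (Y × Y)))
    (hBdiss : ∀ y : B.domain, (⟪B y, (y : Y)⟫_ℂ).re ≤ 0) :
    (∀ v : X, Q v ∈ B.domain → E v = 0 → BQap Q B v = 0 → v = 0) ↔
    (∀ (x0 : X) (T : ℝ), 0 < T →
      ∀ x1 x2 : ℝ → X, IsMildSolution E Q B x0 T x1 → IsMildSolution E Q B x0 T x2 →
        ∀ t ∈ Set.Icc (0 : ℝ) T, x1 t = x2 t) := by
  constructor
  · intro hker
    obtain ⟨Qi, hQi, hQQi⟩ := hQinv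
    set A := (ContinuousLinearMap.adjoint Q).comp E with hA
    intro x0 T hT x1 x2 h1 h2 t ht
    obtain ⟨hc1, h01, heq1⟩ := h1
    obtain ⟨hc2, h02, heq2⟩ := h2
    set x : ℝ → X := fun s => x1 s - x2 s with hxdef
    rw [← sub_eq_zero]
    show x t = 0
    have hxcont : ContinuousOn x (Set.Icc 0 T) := hc1.sub hc2
    have hx0 : x 0 = 0 := by rw [hxdef]; simp [h01, h02]
    -- continuous global extension of x
    set g : ℝ → X := fun s => x ((Set.projIcc 0 T hT.le s : Set.Icc (0:ℝ) T) : ℝ) with hgdef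
    have hgx : ∀ s ∈ Set.Icc (0:ℝ) T, g s = x s := fun s hs => by
      rw [hgdef]; simp [Set.projIcc_of_mem hT.le hs]
    have hgcont : Continuous g :=
      hxcont.comp_continuous (continuous_subtype_val.comp continuous_projIcc)
        (fun s => (Set.projIcc 0 T hT.le s).2)
    set u : ℝ → X := fun s => ∫ r in (0:ℝ)..s, g r with hudef
    have hu_deriv : ∀ s, HasDerivAt u (g s) s := fun s =>
      intervalIntegral.integral_hasDerivAt_right (hgcont.intervalIntegrable 0 s)
        hgcont.stronglyMeasurable.stronglyMeasurableAtFilter hgcont.continuousAt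
    have hucont : Continuous u := by
      rw [continuous_iff_continuousAt]; exact fun s => (hu_deriv s).continuousAt
    have hu_eq : ∀ s ∈ Set.Icc (0:ℝ) T,
        u s = (∫ r in (0:ℝ)..s, x1 r) - (∫ r in (0:ℝ)..s, x2 r) := by
      intro s hs
      have hsub : Set.uIcc (0:ℝ) s ⊆ Set.Icc 0 T := by
        rw [Set.uIcc_of_le hs.1]; exact Set.Icc_subset_Icc le_rfl hs.2
      have h1' : u s = ∫ r in (0:ℝ)..s, x r :=
        intervalIntegral.integral_congr (fun r hr => hgx r (hsub hr))
      rw [h1', hxdef]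
      exact intervalIntegral.integral_sub ((hc1.mono hsub).intervalIntegrable)
        ((hc2.mono hsub).intervalIntegrable)
    have hmemu : ∀ s ∈ Set.Icc (0:ℝ) T, Q (u s) ∈ B.domain := by
      intro s hs
      rw [hu_eq s hs, map_sub]
      exact sub_mem (heq1 s hs).1 (heq2 s hs).1
    have hBu : ∀ s, ∀ hs : s ∈ Set.Icc (0:ℝ) T,
        B ⟨Q (u s), hmemu s hs⟩ = E (x s) := by
      intro s hs
      obtain ⟨m1, e1⟩ := heq1 s hs
      obtain ⟨m2, e2⟩ := heq2 s hs
      rw [BQap, dif_pos m1] at e1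
      rw [BQap, dif_pos m2] at e2
      have he : (⟨Q (u s), hmemu s hs⟩ : B.domain)
          = (⟨Q (∫ r in (0:ℝ)..s, x1 r), m1⟩ : B.domain) - ⟨Q (∫ r in (0:ℝ)..s, x2 r), m2⟩ :=
        Subtype.ext (by simp [hu_eq s hs, map_sub])
      rw [he, B.map_sub]
      have : E (x s) = E (x1 s) - E (x2 s) := by rw [hxdef]; simp
      rw [this]
      rw [sub_eq_iff_eq_add] at e1 e2
      rw [e1, e2]; abel
    set f : ℝ → ℝ := fun s => (⟪A (u s), u s⟫_ℂ).re with hfdef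
    have hf_deriv : ∀ s, HasDerivAt f ((⟪A (u s), g s⟫_ℂ + ⟪A (g s), u s⟫_ℂ).re) s := by
      intro s
      have h1 : HasDerivAt (fun r => A (u r)) (A (g s)) s :=
        (A.restrictScalars ℝ).hasFDerivAt.comp_hasDerivAt s (hu_deriv s)
      have h2 : HasDerivAt (fun r => ⟪A (u r), u r⟫_ℂ)
          (⟪A (u s), g s⟫_ℂ + ⟪A (g s), u s⟫_ℂ) s := h1.inner ℂ (hu_deriv s)
      have h3 := Complex.reCLM.hasFDerivAt.comp_hasDerivAt s h2
      simp only [Complex.reCLM_apply, Function.comp_def, Complex.add_re] at h3 ⊢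
      exact h3
    have hadjA : ContinuousLinearMap.adjoint A = A := by
      rwa [IsSelfAdjoint, ContinuousLinearMap.star_eq_adjoint] at hQE
    have hderiv_nonpos : ∀ s ∈ Set.Ioo (0:ℝ) T, deriv f s ≤ 0 := by
      intro s hs
      have hsI : s ∈ Set.Icc (0:ℝ) T := Set.Ioo_subset_Icc_self hs
      rw [(hf_deriv s).deriv, hgx s hsI]
      have hswap : ⟪A (u s), x s⟫_ℂ = (starRingEnd ℂ) ⟪A (x s), u s⟫_ℂ := by
        rw [← hadjA, ContinuousLinearMap.adjoint_inner_left, inner_conj_symm, hadjA]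
      have hre : (⟪A (u s), x s⟫_ℂ + ⟪A (x s), u s⟫_ℂ).re
          = 2 * (⟪A (x s), u s⟫_ℂ).re := by
        rw [hswap]; rw [Complex.add_re, Complex.conj_re]; ring
      rw [hre]
      have h3 : ⟪A (x s), u s⟫_ℂ
          = ⟪B ⟨Q (u s), hmemu s hsI⟩, ((⟨Q (u s), hmemu s hsI⟩ : B.domain) : Y)⟫_ℂ := by
        rw [hA, ContinuousLinearMap.comp_apply, ContinuousLinearMap.adjoint_inner_left,
          ← hBu s hsI]
      rw [h3]
      have := hBdiss ⟨Q (u s), hmemu s hsI⟩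
      linarith
    have hf_cont : Continuous f :=
      Complex.continuous_re.comp ((A.continuous.comp hucont).inner hucont)
    have hanti : AntitoneOn f (Set.Icc 0 T) := by
      apply antitoneOn_of_deriv_nonpos (convex_Icc 0 T) hf_cont.continuousOn
      · intro s hs; exact (hf_deriv s).differentiableAt.differentiableWithinAt
      · intro s hs; rw [interior_Icc] at hs; exact hderiv_nonpos s hs
    have hu0 : u 0 = 0 := intervalIntegral.integral_same
    have hf0 : f 0 = 0 := by rw [hfdef]; simp [hu0]
    have hfz : ∀ s ∈ Set.Icc (0:ℝ) T, f s = 0 := by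
      intro s hs
      have h1 := hanti (Set.left_mem_Icc.mpr hT.le) hs hs.1
      rw [hf0] at h1
      exact le_antisymm h1 (hQEnn (u s))
    have hAu : ∀ s ∈ Set.Icc (0:ℝ) T, A (u s) = 0 := fun s hs =>
      pos_op_apply_eq_zero hQE hQEnn (hfz s hs)
    have hEu : ∀ s ∈ Set.Icc (0:ℝ) T, E (u s) = 0 := by
      intro s hs
      have h0 : ContinuousLinearMap.adjoint Q (E (u s)) = 0 := hAu s hs
      have hz : ⟪E (u s), E (u s)⟫_ℂ = 0 := by
        calc ⟪E (u s), E (u s)⟫_ℂ = ⟪E (u s), Q (Qi (E (u s)))⟫_ℂ := by rw [hQQi]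
          _ = ⟪ContinuousLinearMap.adjoint Q (E (u s)), Qi (E (u s))⟫_ℂ := by
              rw [ContinuousLinearMap.adjoint_inner_left]
          _ = 0 := by rw [h0]; simp
      exact inner_self_eq_zero.mp hz
    have hEx : ∀ s ∈ Set.Icc (0:ℝ) T, E (x s) = 0 := by
      have hIco : ∀ s ∈ Set.Ico (0:ℝ) T, E (x s) = 0 := by
        intro s hs
        rcases eq_or_lt_of_le hs.1 with h | h
        · rw [← h, hx0, map_zero]
        · have hEux : HasDerivAt (fun r => E (u r)) (E (g s)) s :=
            (E.restrictScalars ℝ).hasFDerivAt.comp_hasDerivAt s (hu_deriv s)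
          have hev : (fun r => E (u r)) =ᶠ[𝓝 s] fun _ => (0:Y) := by
            filter_upwards [Icc_mem_nhds h hs.2] with r hr using hEu r hr
          have h0 : HasDerivAt (fun r => E (u r)) 0 s :=
            (hasDerivAt_const s (0:Y)).congr_of_eventuallyEq hev
          have huniq := h0.unique hEux
          rw [hgx s (Set.Ico_subset_Icc_self hs)] at huniq
          exact huniq.symm
      have heqon : Set.EqOn (fun s => E (x s)) (fun _ => (0:Y)) (Set.Icc 0 T) := by
        apply Set.EqOn.of_subset_closure (fun s hs => hIco s hs)
          (E.continuous.comp_continuousOn hxcont) continuousOn_const Set.Ico_subset_Icc_self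
        rw [closure_Ico hT.ne]
      exact fun s hs => heqon hs
    have hBx0 : ∀ s, ∀ hs : s ∈ Set.Icc (0:ℝ) T, B ⟨Q (u s), hmemu s hs⟩ = 0 := by
      intro s hs; rw [hBu s hs, hEx s hs]
    -- slope argument: Q (x t) ∈ D(B) and B (Q (x t)) = 0, via closedness of the graph
    have hslope : Tendsto (slope u t) (𝓝[≠] t) (𝓝 (x t)) := by
      have h := hasDerivAt_iff_tendsto_slope.mp (hu_deriv t)
      rwa [hgx t ht] at h
    set S : Set ℝ := Set.Icc 0 T \ {t} with hSdef
    have hne : (𝓝[S] t).NeBot := by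
      rw [← mem_closure_iff_nhdsWithin_neBot]
      rcases lt_or_eq_of_le ht.2 with h | h
      · have hsub : Set.Ioo t T ⊆ S := fun r hr =>
          ⟨⟨le_trans ht.1 hr.1.le, hr.2.le⟩, hr.1.ne'⟩
        exact closure_mono hsub (by rw [closure_Ioo h.ne]; exact ⟨le_rfl, h.le⟩)
      · have hsub : Set.Ioo 0 T ⊆ S := fun r hr =>
          ⟨⟨hr.1.le, hr.2.le⟩, by simp only [Set.mem_singleton_iff, h]; exact hr.2.ne⟩
        refine closure_mono hsub ?_
        rw [closure_Ioo hT.ne]; exact ht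
    have htend : Tendsto (fun s => (Q (slope u t s), (0:Y))) (𝓝[S] t)
        (𝓝 (Q (x t), (0:Y))) := by
      have h1 : Tendsto (slope u t) (𝓝[S] t) (𝓝 (x t)) :=
        hslope.mono_left (nhdsWithin_mono t (fun r hr => hr.2))
      exact ((Q.continuous.tendsto _).comp h1).prodMk_nhds tendsto_const_nhds
    have hmemgraph : ∀ s ∈ S, (Q (slope u t s), (0:Y)) ∈ B.graph := by
      intro s hs
      have hsI : s ∈ Set.Icc (0:ℝ) T := hs.1
      have hQs : Q (slope u t s) = (((s - t)⁻¹ : ℝ) : ℂ) • (Q (u s) - Q (u t)) := by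
        rw [slope_def_module, Q.map_smul_of_tower, map_sub, Complex.coe_smul]
      have hmem : Q (slope u t s) ∈ B.domain := by
        rw [hQs]
        exact Submodule.smul_mem _ _ (sub_mem (hmemu s hsI) (hmemu t ht))
      have hval : B ⟨Q (slope u t s), hmem⟩ = 0 := by
        have he : (⟨Q (slope u t s), hmem⟩ : B.domain)
            = (((s - t)⁻¹ : ℝ) : ℂ) • ((⟨Q (u s), hmemu s hsI⟩ : B.domain) - ⟨Q (u t), hmemu t ht⟩) :=
          Subtype.ext (by simpa using hQs)
        rw [he, B.map_smul, B.map_sub, hBx0 s hsI, hBx0 t ht, sub_zero, smul_zero]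
      have := B.mem_graph ⟨Q (slope u t s), hmem⟩
      rwa [hval] at this
    have hgraph : (Q (x t), (0:Y)) ∈ B.graph := by
      refine hBclosed.mem_of_tendsto htend ?_
      filter_upwards [self_mem_nhdsWithin] with s hs using hmemgraph s hs
    rw [LinearPMap.mem_graph_iff] at hgraph
    obtain ⟨yt, hy1, hy2⟩ := hgraph
    have hy1' : (yt : Y) = Q (x t) := hy1
    have hmemxt : Q (x t) ∈ B.domain := hy1' ▸ yt.2
    have hBQxt : BQap Q B (x t) = 0 := by
      rw [BQap, dif_pos hmemxt]
      have he : (⟨Q (x t), hmemxt⟩ : B.domain) = yt := Subtype.ext hy1'.symm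
      rw [he]; exact hy2
    exact hker (x t) hmemxt (hEx t ht) hBQxt
  · intro huniq v hv hEv hBv
    have hB0 : B ⟨Q v, hv⟩ = 0 := by rwa [BQap, dif_pos hv] at hBv
    -- helper: for complex scalar c, BQap Q B (c • v) = 0 and membership
    have hmemc : ∀ c : ℂ, Q (c • v) ∈ B.domain := fun c => by
      rw [map_smul]; exact Submodule.smul_mem _ _ hv
    have hBc : ∀ c : ℂ, BQap Q B (c • v) = 0 := by
      intro c
      rw [BQap, dif_pos (hmemc c)]
      have he : (⟨Q (c • v), hmemc c⟩ : B.domain) = c • (⟨Q v, hv⟩ : B.domain) :=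
        Subtype.ext (by simp)
      rw [he, B.map_smul, hB0, smul_zero]
    set x1 : ℝ → X := fun _ => v with hx1
    set x2 : ℝ → X := fun s => ((1 : ℂ) - (s : ℝ)) • v with hx2
    have hs1 : IsMildSolution E Q B v 1 x1 := by
      refine ⟨continuousOn_const, rfl, fun t ht => ?_⟩
      have hint : (∫ s in (0:ℝ)..t, x1 s) = ((t : ℂ)) • v := by
        rw [hx1]
        simp [intervalIntegral.integral_const, ← Complex.coe_smul]
      rw [hint]
      exact ⟨hmemc t, by rw [hBc]; simp [hx1]⟩
    have hs2 : IsMildSolution E Q B v 1 x2 := by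
      refine ⟨(Continuous.smul (continuous_const.sub Complex.continuous_ofReal) continuous_const).continuousOn, by simp [hx2], fun t ht => ?_⟩
      have hint : (∫ s in (0:ℝ)..t, x2 s) = ((t : ℂ) - (t^2/2 : ℝ)) • v := by
        rw [hx2]
        rw [intervalIntegral.integral_smul_const]
        congr 1
        rw [intervalIntegral.integral_sub intervalIntegrable_const
          (Continuous.intervalIntegrable Complex.continuous_ofReal 0 t)]
        have : (∫ s in (0:ℝ)..t, ((s:ℝ) : ℂ)) = ((t^2/2 : ℝ) : ℂ) := by
          rw [intervalIntegral.integral_ofReal]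
          norm_num [integral_id]
        rw [this]
        simp
      rw [hint]
      refine ⟨hmemc _, ?_⟩
      rw [hBc]
      simp [hx2, hEv]
    have := huniq v 1 one_pos x1 x2 hs1 hs2 1 ⟨zero_le_one, le_rfl⟩
    rw [hx1, hx2] at this
    simpa using this
end
end
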